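/- arXiv:1809.01634 — 3 statements merged into one kernel-verified Lean document; each statement's English description precedes it below -/
import Mathlib

section
/- Let G be a countable group, A and B finite sets, ν a shift-invariant Borel probability measure on B^G, and π : B^G → A^G a measurable equivariant map. Then for every ε > 0 there exists a cellular map π_ε : B^G → A^G such that ν({ y ∈ B^G : (π(y))(1_G) ≠ (π_ε(y))(1_G) }) < ε. -/
open Filter MeasureTheory
open scoped Pointwise Classical

namespace Brudno

noncomputable section

/-- Complexity of a binary string `x` relative to a partial function `f` :
the minimal length of a `y` with `f y = x`. -/
def CF (f : List Bool →. List Bool) (x : List Bool) : ℕ :=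
  sInf { n | ∃ y : List Bool, y.length = n ∧ x ∈ f y }

/-- `u` is an optimal partial computable machine: it is partial computable, and for
every partial computable `f` there is a constant `K` with `C_u x ≤ C_f x + K` for all `x`. -/
def Optimal (u : List Bool →. List Bool) : Prop :=
  Partrec u ∧ ∀ f : List Bool →. List Bool, Partrec f →
    ∃ K : ℕ, ∀ x y : List Bool, x ∈ f y → CF u x ≤ y.length + K

/-- Kolmogorov complexity of a natural number (relative to the machine `u`),
via the binary representation. -/
def KC (u : List Bool →. List Bool) (n : ℕ) : ℕ := CF u (Nat.bits n)

/-- A fixed computable injective encoding of finite subsets of `ℕ` into `ℕ`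
(hence into binary strings). -/
def encFinsetNat (F : Finset ℕ) : ℕ := Encodable.encode (F.sort (· ≤ ·))

variable {G A B : Type}

/-- Encoding of a finite subset of `G`, where `G` has underlying set `ℕ` via `e`. -/
def encFinset (e : G ≃ ℕ) (F : Finset G) : ℕ := encFinsetNat (F.image e)

/-- The group multiplication is computable on the underlying set `ℕ`. -/
def ComputableMul [Group G] (e : G ≃ ℕ) : Prop :=
  Computable₂ fun m n : ℕ => e (e.symm m * e.symm n)

/-- A Følner sequence: a sequence of (nonempty) finite subsets with
`|gFᵢ \ Fᵢ| / |Fᵢ| → 0` for every `g ∈ G`. -/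
def IsFolner [Group G] (F : ℕ → Finset G) : Prop :=
  (∀ i, (F i).Nonempty) ∧
    ∀ g : G,
      Tendsto (fun i => (((F i).image (fun h => g * h) \ F i).card : ℝ) / ((F i).card : ℝ))
        atTop (nhds 0)

/-- A tempered sequence: `|⋃_{j<i} Fⱼ⁻¹ Fᵢ| ≤ K |Fᵢ|` for all `i`. -/
def Tempered [Group G] (F : ℕ → Finset G) : Prop :=
  ∃ K : ℝ, 0 < K ∧
    ∀ i : ℕ, ((((Finset.range i).biUnion fun j => (F j)⁻¹ * F i)).card : ℝ) ≤ K * ((F i).card : ℝ)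

/-- A modest sequence: `C(Fᵢ)/|Fᵢ| → 0`. -/
def Modest (u : List Bool →. List Bool) (e : G ≃ ℕ) (F : ℕ → Finset G) : Prop :=
  Tendsto (fun i => (KC u (encFinset e (F i)) : ℝ) / ((F i).card : ℝ)) atTop (nhds 0)

/-- The shift action of `G` on `A^G`: `(g • x) h = x (h * g)`. -/
def shift [Group G] (g : G) (x : G → A) : G → A := fun h => x (h * g)

/-- A fixed computable injective encoding of the restriction of `x : G → A` to a finite
subset `F ⊆ G` (a partial map with finite domain), listing the domain in increasing
order of the ℕ-codes. -/
def encRestrict [Encodable A] (e : G ≃ ℕ) (F : Finset G) (x : G → A) : ℕ :=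
  Encodable.encode
    (((F.image e).sort (· ≤ ·)).map fun n => (n, Encodable.encode (x (e.symm n))))

/-- Upper asymptotic complexity of `x ∈ A^G` relative to the sequence `F`. -/
def uac [Encodable A] (u : List Bool →. List Bool) (e : G ≃ ℕ) (F : ℕ → Finset G)
    (x : G → A) : ℝ :=
  limsup (fun i => (KC u (encRestrict e (F i) x) : ℝ) / ((F i).card : ℝ)) atTop

/-- Lower asymptotic complexity of `x ∈ A^G` relative to the sequence `F`. -/
def lac [Encodable A] (u : List Bool →. List Bool) (e : G ≃ ℕ) (F : ℕ → Finset G)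
    (x : G → A) : ℝ :=
  liminf (fun i => (KC u (encRestrict e (F i) x) : ℝ) / ((F i).card : ℝ)) atTop

/-- The product topology on `A^G`, `A` being discrete. -/
def prodiscrete (G A : Type) : TopologicalSpace (G → A) :=
  @Pi.topologicalSpace G (fun _ => A) fun _ => ⊥

/-- The Borel σ-algebra of the prodiscrete topology on `A^G`. -/
def prodisBorel (G A : Type) : MeasurableSpace (G → A) := @borel (G → A) (prodiscrete G A)

/-- A subshift: a closed shift-invariant subset of `A^G`. -/
def IsSubshift [Group G] (X : Set (G → A)) : Prop :=
  @IsClosed (G → A) (prodiscrete G A) X ∧ ∀ g : G, ∀ x ∈ X, shift g x ∈ X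

/-- The number of distinct restrictions to `F` of elements of `X`, i.e. `|pr_F(X)|`. -/
def projCount (F : Finset G) (X : Set (G → A)) : ℕ :=
  Nat.card ↥((fun (x : G → A) (g : ↥F) => x ↑g) '' X)

/-- Shannon entropy (base 2) of the join partition `α^F` (whose atoms are the
cylinders over the finite set `F`), for the measure `μ`. -/
def Hjoin [Fintype A] (μ : @Measure (G → A) (prodisBorel G A)) (F : Finset G) : ℝ :=
  -∑ w : ↥F → A,
      (μ {x : G → A | ∀ g : ↥F, x ↑g = w g}).toReal *
        Real.logb 2 (μ {x : G → A | ∀ g : ↥F, x ↑g = w g}).toReal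

/-- Shannon entropy (base 2) of the canonical alphabet partition. -/
def Halpha [Group G] [Fintype A] (μ : @Measure (G → A) (prodisBorel G A)) : ℝ :=
  -∑ a : A, (μ {x : G → A | x 1 = a}).toReal * Real.logb 2 (μ {x : G → A | x 1 = a}).toReal

/-- `cont` of the restriction of `x` to `F`: the word of values of `x` on `F`,
listed in increasing order of the ℕ-codes of the elements of `F`. -/
def contWord (e : G ≃ ℕ) (F : Finset G) (x : G → A) : List A :=
  ((F.image e).sort (· ≤ ·)).map fun n => x (e.symm n)

/-- A fixed computable injective encoding of words over `A`. -/
def encWord [Encodable A] (w : List A) : ℕ := Encodable.encode w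

/-- Frequency of the letter `a` in the word `w`. -/
def freq (w : List A) (a : A) : ℝ :=
  ((w.filter fun b => decide (b = a)).length : ℝ) / (w.length : ℝ)

/-- Shannon entropy (base 2) of the letter-frequency vector of the word `w`. -/
def wordEntropy [Fintype A] (w : List A) : ℝ :=
  -∑ a : A, freq w a * Real.logb 2 (freq w a)

/-- The binary entropy function `H(p, 1-p)`. -/
def Hbin (p : ℝ) : ℝ := -(p * Real.logb 2 p) - (1 - p) * Real.logb 2 (1 - p)

/-- Normalized Hamming distance between two words (of the same length). -/
def hammingDist (w w' : List A) : ℝ :=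
  (((w.zip w').filter fun p => decide (p.1 ≠ p.2)).length : ℝ) / (w.length : ℝ)

end

/-- The prodiscrete Borel σ-algebra coincides with the product σ-algebra
(each factor getting the discrete σ-algebra `⊤`). -/
lemma prodisBorel_eq_pi (G C : Type) [Countable G] [Finite C] :
    prodisBorel G C = @MeasurableSpace.pi G (fun _ => C) (fun _ => ⊤) := by
  letI : TopologicalSpace C := ⊥
  haveI : DiscreteTopology C := ⟨rfl⟩
  letI : MeasurableSpace C := ⊤
  haveI : BorelSpace C := ⟨borel_eq_top_of_discrete.symm⟩
  exact (Pi.borelSpace (X := fun _ : G => C)).measurable_eq.symm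

/-- **cellular approximation.** Any measurable equivariant map
`π : B^G → A^G`, with respect to a shift-invariant Borel probability measure `ν` on
`B^G`, can be approximated by a cellular map `π_ε` so that the set where the generator
maps differ has measure `< ε`. -/
theorem statement9 {G A B : Type} [Group G] [Countable G] [Fintype A] [Fintype B]
    (ν : @Measure (G → B) (prodisBorel G B)) (hν1 : ν Set.univ = 1)
    (hinv : ∀ g : G, @Measure.map _ _ (prodisBorel G B) (prodisBorel G B) (shift g) ν = ν)
    (π : (G → B) → (G → A))
    (hmeas : @Measurable _ _ (prodisBorel G B) (prodisBorel G A) π)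
    (hequi : ∀ (g : G) (y : G → B), π (shift g y) = shift g (π y))
    (ε : ℝ) (hε : 0 < ε) :
    ∃ πε : (G → B) → (G → A),
      (∀ (g : G) (y : G → B), πε (shift g y) = shift g (πε y)) ∧
      (∃ (M : Finset G) (τ : (↥M → B) → A), ∀ y : G → B, πε y 1 = τ fun m : ↥M => y ↑m) ∧
      ν {y : G → B | π y 1 ≠ πε y 1} < ENNReal.ofReal ε := by
  classical
  letI mB : MeasurableSpace B := ⊤
  letI mA : MeasurableSpace A := ⊤
  letI : MeasurableSpace (G → B) := prodisBorel G B
  letI : MeasurableSpace (G → A) := prodisBorel G A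
  have hB : prodisBorel G B = MeasurableSpace.pi := prodisBorel_eq_pi G B
  have hA : prodisBorel G A = MeasurableSpace.pi := prodisBorel_eq_pi G A
  -- nonemptiness
  have hBne : Nonempty (G → B) := by
    by_contra h
    rw [not_nonempty_iff] at h
    have huniv : (Set.univ : Set (G → B)) = ∅ := Set.eq_empty_of_isEmpty _
    rw [huniv, measure_empty] at hν1
    exact zero_ne_one hν1
  obtain ⟨y0⟩ := hBne
  have hAne : Nonempty A := ⟨π y0 1⟩
  haveI : IsFiniteMeasure ν := ⟨by rw [hν1]; exact ENNReal.one_lt_top⟩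
  -- the generator map and its measurability
  set f : (G → B) → A := fun y => π y 1 with hfdef
  have hfmeas : ∀ a : A, MeasurableSet (f ⁻¹' {a}) := by
    intro a
    have h1 : MeasurableSet[prodisBorel G A] ((fun x : G → A => x 1) ⁻¹' {a}) := by
      rw [hA]
      exact measurable_pi_apply 1 (show MeasurableSet[⊤] {a} from trivial)
    exact hmeas h1
  -- cylinder sets form a measure-dense algebra
  set 𝒜 := measurableCylinders (fun _ : G => B) with h𝒜def
  have hAlg : IsSetAlgebra 𝒜 :=
    ⟨empty_mem_measurableCylinders _, fun s hs => compl_mem_measurableCylinders hs,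
      fun s t hs ht => union_mem_measurableCylinders hs ht⟩
  have hgen : (prodisBorel G B) = MeasurableSpace.generateFrom 𝒜 := by
    rw [hB, h𝒜def, generateFrom_measurableCylinders]
  have hdense := Measure.MeasureDense.of_generateFrom_isSetAlgebra_finite (μ := ν) hAlg hgen
  -- approximation of each fiber
  set n : ℝ := (Fintype.card A : ℝ) with hn
  have hn0 : 0 ≤ n := by positivity
  set δ : ℝ := ε / (n + 1) with hδ
  have hδ0 : 0 < δ := by positivity
  choose t ht hνt using fun a : A =>
    hdense.approx (f ⁻¹' {a}) (hfmeas a) (measure_ne_top ν _) δ hδ0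
  choose Ma Sa hSa hta using fun a : A => (mem_measurableCylinders (t a)).1 (ht a)
  -- the common memory set
  set M : Finset G := Finset.univ.biUnion Ma with hM
  have hMa : ∀ a : A, Ma a ⊆ M := fun a =>
    Finset.subset_biUnion_of_mem Ma (Finset.mem_univ a)
  set T : A → Set (↥M → B) :=
    fun a => {w | (fun i : ↥(Ma a) => w ⟨i.1, hMa a i.2⟩) ∈ Sa a} with hT
  have key : ∀ (y : G → B) (a : A), y ∈ t a ↔ (fun m : ↥M => y ↑m) ∈ T a := by
    intro y a
    rw [hta a]
    exact Iff.rfl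
  -- the cellular approximation
  set τ : (↥M → B) → A :=
    fun w => if h : ∃ a, w ∈ T a then h.choose else Classical.choice hAne with hτ
  refine ⟨fun y => fun h => τ (fun m : ↥M => y (↑m * h)), ?_, ⟨M, τ, fun y => ?_⟩, ?_⟩
  · intro g y
    funext h
    show τ (fun m : ↥M => (shift g y) (↑m * h)) = τ (fun m : ↥M => y (↑m * (h * g)))
    simp only [shift, mul_assoc]
  · show τ (fun m : ↥M => y (↑m * 1)) = τ fun m : ↥M => y ↑m
    exact congrArg τ (funext fun m => by rw [mul_one])
  · -- the measure estimate
    set gfun : (G → B) → A := fun y => τ (fun m : ↥M => y ↑m) with hg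
    have hset : {y : G → B | π y 1 ≠ (fun h => τ (fun m : ↥M => y (↑m * h))) 1}
        = {y : G → B | f y ≠ gfun y} := by
      ext y
      have : (fun m : ↥M => y (↑m * 1)) = fun m : ↥M => y ↑m :=
        funext fun m => by rw [mul_one]
      simp only [Set.mem_setOf_eq, hg, this]
      exact Iff.rfl
    have hsub : {y : G → B | f y ≠ gfun y} ⊆ ⋃ a : A, symmDiff (f ⁻¹' {a}) (t a) := by
      intro y hy
      simp only [Set.mem_setOf_eq] at hy
      by_cases hyt : y ∈ t (f y)
      · have hex : ∃ a, (fun m : ↥M => y ↑m) ∈ T a := ⟨f y, (key y (f y)).1 hyt⟩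
        have hgy : gfun y = hex.choose := dif_pos hex
        have hytb : y ∈ t hex.choose := (key y hex.choose).2 hex.choose_spec
        refine Set.mem_iUnion.2 ⟨hex.choose, Set.mem_symmDiff.2 (Or.inr ⟨hytb, ?_⟩)⟩
        intro hmem
        exact hy (by rw [hgy]; exact hmem)
      · exact Set.mem_iUnion.2 ⟨f y, Set.mem_symmDiff.2 (Or.inl ⟨rfl, hyt⟩)⟩
    have hfin : ((Fintype.card A : ℕ) : ENNReal) * ENNReal.ofReal δ < ENNReal.ofReal ε := by
      rw [← ENNReal.ofReal_natCast, ← ENNReal.ofReal_mul (by positivity)]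
      refine (ENNReal.ofReal_lt_ofReal_iff hε).2 ?_
      have hne : n + 1 ≠ 0 := by positivity
      have hcancel : δ * (n + 1) = ε := div_mul_cancel₀ ε hne
      nlinarith [hδ0]
    calc ν {y : G → B | π y 1 ≠ (fun h => τ (fun m : ↥M => y (↑m * h))) 1}
        = ν {y : G → B | f y ≠ gfun y} := by rw [hset]
      _ ≤ ν (⋃ a : A, symmDiff (f ⁻¹' {a}) (t a)) := measure_mono hsub
      _ ≤ ∑ a : A, ν (symmDiff (f ⁻¹' {a}) (t a)) := measure_iUnion_fintype_le ν _
      _ ≤ ∑ _a : A, ENNReal.ofReal δ :=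
          Finset.sum_le_sum fun a _ => (hνt a).le
      _ = ((Fintype.card A : ℕ) : ENNReal) * ENNReal.ofReal δ := by
          rw [Finset.sum_const, Finset.card_univ, nsmul_eq_mul]
      _ < ENNReal.ofReal ε := hfin

end Brudno
end

section
/- Let A be a finite set. For every ε > 0 there exists N such that for every word w ∈ A^* with |w| ≥ N, C(w) ≤ |w| · (H(p(w)) + ε), where p(w) is the probability vector of letter frequencies of w and H(p) = -∑_{a∈A} p_a log₂ p_a. -/
open Filter MeasureTheory
open scoped Pointwise Classical

namespace Brudno

open Encodable

/-- value of a little-endian bit list -/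
def num (l : List Bool) : ℕ := l.foldr (fun b m => 2 * m + cond b 1 0) 0

@[simp] lemma num_nil : num [] = 0 := rfl
@[simp] lemma num_cons (b l) : num (b :: l) = 2 * num l + cond b 1 0 := rfl

lemma num_bits (n : ℕ) : num n.bits = n := by
  induction n using Nat.binaryRec' with
  | zero => simp [Nat.zero_bits]
  | bit b n h ih =>
      rw [Nat.bits_append_bit n b h, num_cons, ih]
      cases b <;> simp [Nat.bit] <;> omega

lemma primrec_bits : Primrec Nat.bits := by
  have h2 : Primrec₂ (fun (_ : Unit) (n : ℕ) => n.bits) := by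
    apply Primrec.nat_strong_rec (g := fun (_ : Unit) (l : List (List Bool)) =>
      if l.length = 0 then some [] else
        (l[l.length / 2]?).map fun r => (Nat.bodd l.length) :: r)
    · apply Primrec.ite
      · exact (Primrec.eq (α := ℕ)).comp (Primrec.list_length.comp .snd) (.const 0)
      · exact Primrec.const (some [])
      · exact Primrec.option_map
          (Primrec.list_getElem?.comp .snd
            (Primrec.nat_div.comp (Primrec.list_length.comp .snd) (.const 2)))
          ((Primrec.list_cons.comp
            (Primrec.nat_bodd.comp (Primrec.list_length.comp (Primrec.snd.comp .fst)))
            Primrec.snd).to₂)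
    · intro _ n
      rcases Nat.eq_zero_or_pos n with h | h
      · subst h; simp
      · have hlen : ((List.range n).map Nat.bits).length = n := by simp
        have hne : n ≠ 0 := h.ne'
        simp only [hlen, if_neg hne]
        have hlt : n / 2 < n := Nat.div_lt_self h (by norm_num)
        rw [List.getElem?_map]
        rw [List.getElem?_range hlt]
        simp only [Option.map_some]
        congr 1
        have hb : n.bits = n.bodd :: n.div2.bits := by
          conv_lhs => rw [← Nat.bit_bodd_div2 n]
          rw [Nat.bits_append_bit]
          intro hd
          cases hh : n.bodd with
          | true => rfl
          | false =>
              exfalso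
              have := Nat.bit_bodd_div2 n
              rw [hh, hd] at this
              simp [Nat.bit] at this
              omega
        rw [hb, Nat.div2_val]
  exact h2.comp (.const ()) .id

/-- all words of length n over the code alphabet aC -/
def allWordsC (aC : List ℕ) : ℕ → List (List ℕ) := fun n =>
  n.rec [[]] fun _ ih => ih.flatMap fun w => aC.map fun x => x :: w

@[simp] lemma allWordsC_zero (aC) : allWordsC aC 0 = [[]] := rfl
@[simp] lemma allWordsC_succ (aC n) :
    allWordsC aC (n + 1) = (allWordsC aC n).flatMap fun w => aC.map fun x => x :: w := rfl

def countsC (aC : List ℕ) (w : List ℕ) : List ℕ := aC.map fun x => w.count x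

def classC (aC : List ℕ) (c : List ℕ) : List (List ℕ) :=
  (allWordsC aC c.sum).filter fun w => decide (countsC aC w = c)

/-- the decoder -/
def gdec (aC : List ℕ) (y : List Bool) : List Bool :=
  (Option.map (fun w => (Encodable.encode w).bits)
    ((Encodable.decode (α := List ℕ)
        (num ((y.drop ((y.findIdx fun b => b) + 1)).take (y.findIdx fun b => b)))).bind
      fun c => (classC aC c)[
        (num ((y.drop ((y.findIdx fun b => b) + 1)).drop (y.findIdx fun b => b)))]?)).getD []

-- primrec lemmas
lemma primrec_drop : Primrec₂ (fun (l : List Bool) (n : ℕ) => l.drop n) := by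
  have : Primrec fun p : List Bool × ℕ =>
      Nat.rec (motive := fun _ => List Bool) p.1 (fun _ ih => ih.tail) p.2 :=
    Primrec.nat_rec' Primrec.snd Primrec.fst
      ((Primrec.list_tail.comp (Primrec.snd.comp Primrec.snd)).to₂)
  refine this.to₂.of_eq fun l n => ?_
  induction n with
  | zero => rfl
  | succ n ih => simpa [ih] using List.tail_drop l n

lemma primrec_take : Primrec₂ (fun (l : List Bool) (n : ℕ) => l.take n) := by
  have : Primrec fun p : List Bool × ℕ => (List.range p.2).filterMap (p.1[·]?) :=
    Primrec.listFilterMap (Primrec.list_range.comp Primrec.snd)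
      ((Primrec.list_getElem?.comp (Primrec.fst.comp Primrec.fst) Primrec.snd).to₂)
  refine this.to₂.of_eq fun l n => ?_
  induction n with
  | zero => simp
  | succ n ih =>
      rw [List.range_succ, List.filterMap_append, ih, List.take_succ]
      simp [List.filterMap_cons]
      cases l[n]? <;> simp

lemma primrec_num : Primrec num := by
  have h := Primrec.list_foldr (α := List Bool) (β := Bool) (σ := ℕ) (f := id)
    (g := fun _ => 0) (h := fun _ p => 2 * p.2 + cond p.1 1 0) Primrec.id (Primrec.const 0)
    ((Primrec.nat_add.comp
      (Primrec.nat_mul.comp (Primrec.const 2) (Primrec.snd.comp Primrec.snd))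
      (Primrec.cond (Primrec.fst.comp Primrec.snd) (Primrec.const 1) (Primrec.const 0))).to₂)
  exact h.of_eq fun l => rfl

lemma primrec_count : Primrec₂ (fun (w : List ℕ) (x : ℕ) => w.count x) := by
  have h := Primrec.list_foldr (α := List ℕ × ℕ) (β := ℕ) (σ := ℕ) (f := Prod.fst)
    (g := fun _ => 0) (h := fun a p => if p.1 = a.2 then p.2 + 1 else p.2) Primrec.fst
    (Primrec.const 0)
    ((Primrec.ite ((Primrec.eq (α := ℕ)).comp (Primrec.fst.comp Primrec.snd)
        (Primrec.snd.comp Primrec.fst))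
      (Primrec.succ.comp (Primrec.snd.comp Primrec.snd))
      (Primrec.snd.comp Primrec.snd)).to₂)
  refine h.to₂.of_eq fun w x => ?_
  induction w with
  | nil => simp
  | cons b w ih => by_cases h : b = x <;> simp [List.count_cons, ih, h]

lemma primrec_countsC (aC : List ℕ) : Primrec (countsC aC) :=
  Primrec.list_map (Primrec.const aC) primrec_count

lemma primrec_allWordsC (aC : List ℕ) : Primrec (allWordsC aC) := by
  have h := Primrec.nat_rec' (α := ℕ) (f := id) (g := fun _ => ([[]] : List (List ℕ)))
    (h := fun _ p => p.2.flatMap fun w => aC.map fun x => x :: w) Primrec.id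
    (Primrec.const [[]])
    ((Primrec.list_flatMap (Primrec.snd.comp Primrec.snd)
      ((Primrec.list_map (Primrec.const aC)
        ((Primrec.list_cons.comp Primrec.snd (Primrec.snd.comp Primrec.fst)).to₂)).to₂)).to₂)
  exact h.of_eq fun n => rfl

lemma primrec_filter {α β : Type} [Primcodable α] [Primcodable β]
    {f : α → List β} {p : α → β → Bool} (hf : Primrec f) (hp : Primrec₂ p) :
    Primrec fun a => (f a).filter (p a) := by
  have : Primrec fun a => (f a).filterMap fun b => if p a b then some b else none :=
    Primrec.listFilterMap hf
      ((Primrec.ite ((Primrec.eq (α := Bool)).comp hp (Primrec.const true))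
        (Primrec.option_some.comp Primrec.snd) (Primrec.const none)).to₂)
  refine this.of_eq fun a => ?_
  induction f a with
  | nil => simp
  | cons b l ih =>
      rw [List.filterMap_cons, List.filter_cons]
      cases h : p a b <;> simp [h, ih]

lemma primrec_classC (aC : List ℕ) : Primrec (classC aC) := by
  have hsum : Primrec (fun c : List ℕ => c.sum) := by
    have h := Primrec.list_foldr (α := List ℕ) (β := ℕ) (σ := ℕ) (f := id)
      (g := fun _ => 0) (h := fun _ p => p.1 + p.2) Primrec.id (Primrec.const 0)
        ((Primrec.nat_add.comp (Primrec.fst.comp Primrec.snd)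
          (Primrec.snd.comp Primrec.snd)).to₂)
    exact h.of_eq fun l => by simp [List.sum_eq_foldr]
  apply primrec_filter ((primrec_allWordsC aC).comp hsum)
  exact ((Primrec.eq (α := List ℕ)).comp ((primrec_countsC aC).comp Primrec.snd) Primrec.fst).decide

lemma primrec_gdec (aC : List ℕ) : Primrec (gdec aC) := by
  have ht : Primrec fun y : List Bool => y.findIdx fun b => b :=
    Primrec.list_findIdx Primrec.id (Primrec.snd.to₂ (α := List Bool))
  have hr : Primrec fun y : List Bool => y.drop ((y.findIdx fun b => b) + 1) :=
    primrec_drop.comp Primrec.id (Primrec.succ.comp ht)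
  have hcode : Primrec fun y : List Bool =>
      num ((y.drop ((y.findIdx fun b => b) + 1)).take (y.findIdx fun b => b)) :=
    primrec_num.comp (primrec_take.comp hr ht)
  have hk : Primrec fun y : List Bool =>
      num ((y.drop ((y.findIdx fun b => b) + 1)).drop (y.findIdx fun b => b)) :=
    primrec_num.comp (primrec_drop.comp hr ht)
  have hopt : Primrec fun y : List Bool =>
      (Encodable.decode (α := List ℕ)
        (num ((y.drop ((y.findIdx fun b => b) + 1)).take (y.findIdx fun b => b)))).bind
        fun c => (classC aC c)[
          (num ((y.drop ((y.findIdx fun b => b) + 1)).drop (y.findIdx fun b => b)))]? :=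
    Primrec.option_bind (Primrec.decode.comp hcode)
      ((Primrec.list_getElem?.comp ((primrec_classC aC).comp Primrec.snd)
        (hk.comp Primrec.fst)).to₂)
  exact Primrec.option_getD.comp
    (Primrec.option_map hopt
      ((primrec_bits.comp (Primrec.encode.comp Primrec.snd)).to₂))
    (Primrec.const [])



open List Encodable Filter

section Words

variable {A : Type} [Fintype A] [Encodable A]

/-- the coded alphabet -/
noncomputable def aCode (A : Type) [Fintype A] [Encodable A] : List ℕ :=
  (Finset.univ : Finset A).toList.map Encodable.encode

lemma nodup_aCode : (aCode A).Nodup :=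
  (Finset.nodup_toList _).map Encodable.encode_injective

lemma mem_aCode (a : A) : Encodable.encode a ∈ aCode A :=
  List.mem_map.2 ⟨a, Finset.mem_toList.2 (Finset.mem_univ a), rfl⟩

lemma mem_allWordsC {aC : List ℕ} : ∀ {n : ℕ} {w : List ℕ},
    w ∈ allWordsC aC n ↔ w.length = n ∧ ∀ x ∈ w, x ∈ aC := by
  intro n
  induction n with
  | zero =>
      intro w
      simp only [allWordsC_zero, List.mem_singleton]
      constructor
      · rintro rfl; simp
      · rintro ⟨h, -⟩; exact List.length_eq_zero_iff.1 h
  | succ n ih =>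
      intro w
      simp only [allWordsC_succ, List.mem_flatMap, List.mem_map]
      constructor
      · rintro ⟨u, hu, x, hx, rfl⟩
        obtain ⟨hlen, hmem⟩ := ih.1 hu
        refine ⟨by simp [hlen], ?_⟩
        intro y hy
        rcases List.mem_cons.1 hy with rfl | hy
        · exact hx
        · exact hmem y hy
      · rintro ⟨hlen, hmem⟩
        cases w with
        | nil => simp at hlen
        | cons x u =>
            refine ⟨u, ih.2 ⟨by simpa using hlen, fun y hy => hmem y (List.mem_cons_of_mem _ hy)⟩,
              x, hmem x List.mem_cons_self, rfl⟩

lemma sum_count_finset {S : Finset ℕ} : ∀ {w : List ℕ}, (∀ x ∈ w, x ∈ S) →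
    ∑ x ∈ S, w.count x = w.length := by
  intro w
  induction w with
  | nil => simp
  | cons b w ih =>
      intro hmem
      have h1 : ∀ x ∈ w, x ∈ S := fun x hx => hmem x (List.mem_cons_of_mem _ hx)
      have hb : b ∈ S := hmem b List.mem_cons_self
      calc ∑ x ∈ S, (b :: w).count x
          = ∑ x ∈ S, (w.count x + if b = x then 1 else 0) := by
            refine Finset.sum_congr rfl fun x _ => ?_
            rw [List.count_cons]
            by_cases h : b = x <;> simp [h]
        _ = (∑ x ∈ S, w.count x) + ∑ x ∈ S, (if b = x then 1 else 0) :=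
            Finset.sum_add_distrib
        _ = w.length + 1 := by rw [ih h1, Finset.sum_ite_eq S b (fun _ => 1), if_pos hb]
        _ = (b :: w).length := by simp

lemma sum_countsC {aC : List ℕ} (hnd : aC.Nodup) {w : List ℕ} (hw : ∀ x ∈ w, x ∈ aC) :
    (countsC aC w).sum = w.length := by
  have h1 : (countsC aC w).sum = ∑ x ∈ aC.toFinset, w.count x :=
    (List.sum_toFinset _ hnd).symm
  rw [h1, sum_count_finset (fun x hx => List.mem_toFinset.2 (hw x hx))]

lemma sum_flatMap' {α : Type} (l : List α) (f : α → List ℝ) :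
    (l.flatMap f).sum = (l.map fun a => (f a).sum).sum := by
  induction l with
  | nil => simp
  | cons a l ih => simp [List.flatMap_cons, List.sum_append, ih]

lemma sum_map_prod_allWordsC (aC : List ℕ) (q : ℕ → ℝ) : ∀ n : ℕ,
    (((allWordsC aC n).map fun u => (u.map q).prod).sum) = ((aC.map q).sum) ^ n := by
  intro n
  induction n with
  | zero => simp
  | succ n ih =>
      rw [allWordsC_succ, List.map_flatMap, sum_flatMap']
      have h1 : ∀ u : List ℕ, u ∈ allWordsC aC n →
          (((aC.map fun x => x :: u).map fun u' => (u'.map q).prod).sum)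
            = ((aC.map q).sum) * (u.map q).prod := by
        intro u _
        rw [List.map_map]
        have h2 : ((fun u' : List ℕ => (List.map q u').prod) ∘ fun x => x :: u)
            = fun x => q x * (u.map q).prod := by
          funext x; simp [Function.comp]
        rw [h2, List.sum_map_mul_right]
      rw [List.map_congr_left h1]
      have h3 : (fun u : List ℕ => ((aC.map q).sum) * (u.map q).prod)
          = fun u : List ℕ => ((aC.map q).sum) * ((fun v : List ℕ => (v.map q).prod) u) := rfl
      rw [h3, List.sum_map_mul_left, ih, pow_succ]
      ring

lemma map_eq_map_imp {f g : ℕ → ℕ} : ∀ {l : List ℕ}, l.map f = l.map g →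
    ∀ x ∈ l, f x = g x := by
  intro l
  induction l with
  | nil => simp
  | cons a l ih =>
      intro h x hx
      simp only [List.map_cons, List.cons.injEq] at h
      rcases List.mem_cons.1 hx with rfl | hx
      · exact h.1
      · exact ih h.2 x hx

lemma prod_map_count {q : ℕ → ℝ} {aC : List ℕ} {u : List ℕ} (hu : ∀ x ∈ u, x ∈ aC) :
    (u.map q).prod = ∏ x ∈ aC.toFinset, q x ^ u.count x := by
  rw [Finset.prod_list_map_count u q]
  refine Finset.prod_subset (fun x hx => List.mem_toFinset.2 (hu x (List.mem_toFinset.1 hx)))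
    (fun x _ hx => ?_)
  rw [List.count_eq_zero_of_not_mem (fun hmem => hx (List.mem_toFinset.2 hmem)), pow_zero]

lemma rpow_sum' {α : Type} (s : Finset α) (f : α → ℝ) :
    (2:ℝ) ^ (∑ a ∈ s, f a) = ∏ a ∈ s, (2:ℝ) ^ f a := by
  classical
  induction s using Finset.induction with
  | empty => simp
  | insert _ _ h ih => rw [Finset.sum_insert h, Finset.prod_insert h, Real.rpow_add two_pos, ih]

lemma freq_eq_count [DecidableEq A] (w : List A) (a : A) :
    freq w a = ((w.count a : ℝ)) / (w.length : ℝ) := by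
  have h : (w.filter fun b => (b == a)).length = w.count a := by
    rw [← List.countP_eq_length_filter]; rfl
  unfold freq
  rw [← h]
  congr! 2
  all_goals refine congrArg List.length (List.filter_congr fun b _ => ?_)
  all_goals rw [_root_.beq_eq_decide]
  all_goals exact decide_eq_decide.mpr Iff.rfl

lemma wordEntropy_nonneg [DecidableEq A] (w : List A) : 0 ≤ wordEntropy w := by
  unfold wordEntropy
  rw [← Finset.sum_neg_distrib]
  refine Finset.sum_nonneg fun a _ => ?_
  rw [freq_eq_count]
  rcases Nat.eq_zero_or_pos w.length with h0 | hpos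
  · simp [h0]
  rcases Nat.eq_zero_or_pos (w.count a) with hc | hc
  · simp [hc]
  have h1 : (0:ℝ) < (w.count a : ℝ) / w.length := by positivity
  have h2 : (w.count a : ℝ) / w.length ≤ 1 := by
    rw [div_le_one (by positivity)]
    exact_mod_cast List.count_le_length (a := a) (l := w)
  have := Real.logb_nonpos (b := 2) one_lt_two h1.le h2
  nlinarith

/-- the key counting bound: the class of a word has at most `2 ^ (n * H)` elements. -/
lemma card_classC_le [DecidableEq A] (w : List A) (hw : w ≠ []) :
    (((classC (aCode A) (countsC (aCode A) (w.map Encodable.encode))).length : ℝ))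
      ≤ (2:ℝ) ^ ((w.length : ℝ) * wordEntropy w) := by
  set aC := aCode A with haC
  set n := w.length with hn
  set w' := w.map (Encodable.encode : A → ℕ) with hw'
  set c₀ := countsC aC w' with hc₀
  have hnpos : 0 < n := List.length_pos_iff.2 hw
  have hnR : (0:ℝ) < n := by exact_mod_cast hnpos
  have hmemw' : ∀ x ∈ w', x ∈ aC := by
    intro x hx
    obtain ⟨a, _, rfl⟩ := List.mem_map.1 hx
    exact mem_aCode a
  have hlenw' : w'.length = n := by simp [hw', hn]
  have hc0sum : c₀.sum = n := by rw [hc₀, sum_countsC nodup_aCode hmemw', hlenw']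
  set q : ℕ → ℝ := fun x => (w'.count x : ℝ) / n with hq
  have hq0 : ∀ x, 0 ≤ q x := fun x => by positivity
  -- total sum is 1
  have hsumq : (aC.map q).sum = 1 := by
    have h1 : (aC.map q) = (aC.map fun x => ((w'.count x : ℕ) : ℝ)).map (· * (n:ℝ)⁻¹) := by
      rw [List.map_map]; exact List.map_congr_left fun x _ => by
        simp [hq, div_eq_mul_inv]
    have h2 : (aC.map fun x => ((w'.count x : ℕ) : ℝ)).sum = ((countsC aC w').sum : ℝ) := by
      rw [countsC, Nat.cast_list_sum, List.map_map]
      rfl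
    rw [h1]
    have h3 : ((aC.map fun x => ((w'.count x : ℕ) : ℝ)).map (· * (n:ℝ)⁻¹)).sum
        = (aC.map fun x => ((w'.count x : ℕ) : ℝ)).sum * (n:ℝ)⁻¹ := by
      rw [← List.sum_map_mul_right]
      rw [List.map_map]
      rfl
    rw [h3, h2, sum_countsC nodup_aCode hmemw', hlenw']
    field_simp
  -- the weight of every word in the class
  set V : ℝ := ∏ x ∈ aC.toFinset, q x ^ w'.count x with hV
  have hclass_sub : classC aC c₀ = (allWordsC aC n).filter
      fun u => decide (countsC aC u = c₀) := by rw [classC, hc0sum]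
  have hweight : ∀ u ∈ classC aC c₀, (u.map q).prod = V := by
    intro u hu
    rw [hclass_sub, List.mem_filter] at hu
    obtain ⟨hu1, hu2⟩ := hu
    have hc : countsC aC u = c₀ := of_decide_eq_true hu2
    have humem : ∀ x ∈ u, x ∈ aC := (mem_allWordsC.1 hu1).2
    rw [prod_map_count humem, hV]
    refine Finset.prod_congr rfl fun x hx => ?_
    rw [map_eq_map_imp hc x (List.mem_toFinset.1 hx)]
  -- sum over the class
  set L := (classC aC c₀).length with hL
  have hsumclass : ((classC aC c₀).map fun u => (u.map q).prod).sum = (L:ℝ) * V := by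
    rw [List.map_congr_left hweight]
    have : (fun _ : List ℕ => V) = Function.const (List ℕ) V := rfl
    rw [this, List.map_const, List.sum_replicate, nsmul_eq_mul]
  have hle1 : (L:ℝ) * V ≤ 1 := by
    have hsub : (((classC aC c₀).map fun u => (u.map q).prod)).Sublist
        ((allWordsC aC n).map fun u => (u.map q).prod) :=
      (hclass_sub ▸ List.filter_sublist (p := fun u => decide (countsC aC u = c₀)) (l := allWordsC aC n)).map _
    have hnn : ∀ x ∈ (allWordsC aC n).map fun u => (u.map q).prod, (0:ℝ) ≤ x := by
      intro x hx
      obtain ⟨v, _, rfl⟩ := List.mem_map.1 hx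
      exact List.prod_nonneg fun r hr => by
        obtain ⟨x', _, rfl⟩ := List.mem_map.1 hr
        exact hq0 x'
    calc (L:ℝ) * V = ((classC aC c₀).map fun u => (u.map q).prod).sum := hsumclass.symm
      _ ≤ ((allWordsC aC n).map fun u => (u.map q).prod).sum := hsub.sum_le_sum hnn
      _ = 1 := by rw [sum_map_prod_allWordsC aC q n, hsumq, one_pow]

  -- V = 2 ^ (- n H)
  have hVeq : V = (2:ℝ) ^ (-((n:ℝ) * wordEntropy w)) := by
    have hSimg : aC.toFinset = Finset.univ.image (Encodable.encode : A → ℕ) := by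
      ext x
      simp [haC, aCode, List.mem_toFinset, Finset.mem_image, List.mem_map, Finset.mem_toList]
    have hcount : ∀ a : A, w'.count (Encodable.encode a) = w.count a := by
      intro a
      rw [hw']
      exact List.count_map_of_injective w _ Encodable.encode_injective a
    have hVA : V = ∏ a : A, (freq w a) ^ (w.count a) := by
      rw [hV, hSimg, Finset.prod_image (fun x _ y _ h => Encodable.encode_injective h)]
      refine Finset.prod_congr rfl fun a _ => ?_
      rw [freq_eq_count]
      have hq' : q (Encodable.encode a) = ((w.count a : ℝ)) / (w.length : ℝ) := by
        simp only [hq, hcount a, hn]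
      rw [hq', hcount a]
    rw [hVA]
    have hfact : ∀ a : A, (freq w a) ^ (w.count a)
        = (2:ℝ) ^ ((w.count a : ℝ) * Real.logb 2 (freq w a)) := by
      intro a
      rcases Nat.eq_zero_or_pos (w.count a) with hc | hc
      · rw [hc]
        have : freq w a = 0 := by
          rw [freq_eq_count, hc]; simp
        simp [this]
      · have hfr : 0 < freq w a := by
          rw [freq_eq_count]
          have : (0:ℝ) < (w.count a : ℝ) := by exact_mod_cast hc
          positivity
        rw [← Real.rpow_logb two_pos (by norm_num) hfr, ← Real.rpow_natCast
          ((2:ℝ) ^ Real.logb 2 (freq w a)) (w.count a), ← Real.rpow_mul (by norm_num)]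
        rw [Real.rpow_logb two_pos (by norm_num) hfr, ← Real.rpow_logb two_pos (by norm_num) hfr]
        rw [mul_comm]
    calc ∏ a : A, (freq w a) ^ (w.count a)
        = ∏ a : A, (2:ℝ) ^ ((w.count a : ℝ) * Real.logb 2 (freq w a)) :=
          Finset.prod_congr rfl fun a _ => hfact a
      _ = (2:ℝ) ^ (∑ a : A, (w.count a : ℝ) * Real.logb 2 (freq w a)) := (rpow_sum' _ _).symm
      _ = (2:ℝ) ^ (-((n:ℝ) * wordEntropy w)) := by
          congr 1
          unfold wordEntropy
          rw [mul_neg, neg_neg, Finset.mul_sum]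
          refine Finset.sum_congr rfl fun a _ => ?_
          rw [freq_eq_count, hn]
          field_simp
          rw [mul_right_comm]
          exact (mul_div_cancel_right₀ _ (ne_of_gt hnR)).symm
  -- conclude
  have hVpos : 0 < V := by rw [hVeq]; exact Real.rpow_pos_of_pos two_pos _
  have h2 : (L:ℝ) ≤ V⁻¹ := by
    rw [← mul_le_mul_iff_left₀ hVpos]
    calc (L:ℝ) * V ≤ 1 := hle1
      _ = V⁻¹ * V := by field_simp
  rw [hVeq, ← Real.rpow_neg (by norm_num), neg_neg] at h2
  exact h2

end Words

section Correct

open List Encodable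

lemma findIdx_replicate_false : ∀ (t : ℕ) (R : List Bool),
    ((List.replicate t false ++ true :: R).findIdx fun b => b) = t := by
  intro t
  induction t with
  | zero => intro R; simp [List.findIdx_cons]
  | succ t ih =>
      intro R
      rw [List.replicate_succ, List.cons_append, List.findIdx_cons]
      simp [ih R]

lemma getElem?_idxOf' {α : Type} [BEq α] [LawfulBEq α] {a : α} {l : List α} (h : a ∈ l) :
    l[l.idxOf a]? = some a := by
  induction l with
  | nil => cases h
  | cons b l ih =>
      by_cases hba : (b == a) = true
      · have hb : b = a := eq_of_beq hba
        simp [List.idxOf_cons, hba, hb]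
      · have hb : (b == a) = false := by simpa using hba
        rcases List.mem_cons.1 h with rfl | h'
        · simp at hb
        · simp [List.idxOf_cons, hb, ih h']

lemma idxOf_lt_length' {α : Type} [BEq α] [LawfulBEq α] {a : α} {l : List α} (h : a ∈ l) :
    l.idxOf a < l.length := by
  induction l with
  | nil => cases h
  | cons b l ih =>
      by_cases hba : (b == a) = true
      · simp [List.idxOf_cons, hba]
      · have hb : (b == a) = false := by simpa using hba
        rcases List.mem_cons.1 h with rfl | h'
        · simp at hb
        · simp [List.idxOf_cons, hb, Nat.succ_lt_succ (ih h')]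

lemma gdec_correct (aC : List ℕ) (c₀ : List ℕ) (w' : List ℕ) (hmem : w' ∈ classC aC c₀) :
    gdec aC (List.replicate (Encodable.encode c₀).bits.length false ++ true ::
      ((Encodable.encode c₀).bits ++ (List.idxOf w' (classC aC c₀)).bits))
      = (Encodable.encode w').bits := by
  set t := (Encodable.encode c₀).bits.length with ht
  set k := List.idxOf w' (classC aC c₀) with hk
  set R := (Encodable.encode c₀).bits ++ k.bits with hR
  set y := List.replicate t false ++ true :: R with hy
  have hfind : (y.findIdx fun b => b) = t := findIdx_replicate_false t R
  have hdrop : y.drop (t + 1) = R := by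
    rw [hy, show List.replicate t false ++ true :: R
      = (List.replicate t false ++ [true]) ++ R by simp]
    exact List.drop_left' (by simp)
  have htake : R.take t = (Encodable.encode c₀).bits := List.take_left' rfl
  have hdrop2 : R.drop t = k.bits := List.drop_left' rfl
  rw [gdec, hfind, hdrop, htake, hdrop2, num_bits, num_bits, Encodable.encodek]
  rw [Option.bind_some]
  rw [hk]
  simp [getElem?_idxOf' hmem]

lemma encode_map_encode {A : Type} [Encodable A] : ∀ (l : List A),
    Encodable.encode (l.map Encodable.encode) = Encodable.encode l := by
  intro l
  induction l with
  | nil => simp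
  | cons a l ih =>
      rw [List.map_cons, Encodable.encode_list_cons, Encodable.encode_list_cons,
        Encodable.encode_nat, ih]

lemma pair_le (a b : ℕ) : Nat.pair a b ≤ (a + b + 1)^2 := by
  rw [Nat.pair]; split <;> nlinarith

lemma pow_add_one_le {M j : ℕ} (hM : 2 ≤ M) : M ^ j + 1 ≤ M ^ (j+1) := by
  have h1 : 1 ≤ M ^ j := Nat.one_le_pow _ _ (by omega)
  calc M ^ j + 1 ≤ M ^ j + M ^ j := by omega
    _ = M ^ j * 2 := by ring
    _ ≤ M ^ j * M := Nat.mul_le_mul_left _ hM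
    _ = M ^ (j+1) := by ring

lemma encode_list_le (n : ℕ) : ∀ c : List ℕ, (∀ x ∈ c, x ≤ n) →
    Encodable.encode c ≤ (n+2) ^ (4 ^ (c.length + 1)) := by
  intro c
  induction c with
  | nil => intro _; rw [Encodable.encode_list_nil]; positivity
  | cons x c ih =>
      intro hmem
      have hx : x ≤ n := hmem x List.mem_cons_self
      have hc : Encodable.encode c ≤ (n+2) ^ (4 ^ (c.length + 1)) :=
        ih fun z hz => hmem z (List.mem_cons_of_mem _ hz)
      set M := n + 2 with hM
      set E := 4 ^ (c.length + 1) with hE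
      have hM2 : 2 ≤ M := by omega
      have hE1 : 1 ≤ E := Nat.one_le_pow _ _ (by norm_num)
      have hE4 : 4 ≤ E := by
        calc 4 = 4 ^ 1 := by norm_num
          _ ≤ 4 ^ (c.length + 1) := Nat.pow_le_pow_right (by norm_num) (by omega)
      have step1 : Encodable.encode (x :: c) ≤ (x + Encodable.encode c + 1)^2 + 1 := by
        rw [Encodable.encode_list_cons, Encodable.encode_nat]
        have := pair_le x (Encodable.encode c)
        omega
      have step2 : (x + Encodable.encode c + 1)^2 + 1 ≤ (M + M ^ E)^2 + 1 := by
        have h1 : x + Encodable.encode c + 1 ≤ M + M ^ E := by omega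
        have := Nat.pow_le_pow_left h1 2
        omega
      have step3 : (M + M ^ E)^2 ≤ M ^ (2*E + 2) := by
        have h1 : M + M ^ E ≤ M ^ E + M ^ E := by
          have : M ≤ M ^ E := Nat.le_self_pow (by omega) M
          omega
        calc (M + M ^ E)^2 ≤ (M ^ E + M ^ E)^2 := Nat.pow_le_pow_left h1 2
          _ = 4 * (M ^ E)^2 := by ring
          _ ≤ M ^ 2 * (M ^ E)^2 := Nat.mul_le_mul_right _ (by nlinarith)
          _ = M ^ (2*E + 2) := by rw [← pow_mul, ← pow_add]; ring_nf
      have step4 : M ^ (2*E + 2) + 1 ≤ M ^ (2*E + 3) := pow_add_one_le hM2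
      have step5 : M ^ (2*E + 3) ≤ M ^ (4*E) :=
        Nat.pow_le_pow_right (by omega) (by omega)
      have hfin : 4 * E = 4 ^ ((x :: c).length + 1) := by
        rw [hE, List.length_cons]
        ring
      calc Encodable.encode (x :: c) ≤ (x + Encodable.encode c + 1)^2 + 1 := step1
        _ ≤ (M + M ^ E)^2 + 1 := step2
        _ ≤ M ^ (2*E+2) + 1 := by omega
        _ ≤ M ^ (2*E+3) := step4
        _ ≤ M ^ (4*E) := step5
        _ = M ^ (4 ^ ((x :: c).length + 1)) := by rw [hfin]

lemma size_le_of_le_pow {m M P : ℕ} (hM : 2 ≤ M) (hP : 1 ≤ P) (h : m ≤ M ^ P) :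
    Nat.size m ≤ Nat.size M * P := by
  apply Nat.size_le.2
  calc m ≤ M ^ P := h
    _ < (2 ^ Nat.size M) ^ P := Nat.pow_lt_pow_left (Nat.lt_size_self M) (by omega)
    _ = 2 ^ (Nat.size M * P) := by rw [← pow_mul]

lemma size_le_logb {m : ℕ} (hm : 1 ≤ m) : (Nat.size m : ℝ) ≤ Real.logb 2 m + 1 := by
  have hpos : 0 < Nat.size m := Nat.size_pos.2 hm
  have hle : 2 ^ (Nat.size m - 1) ≤ m := by
    by_contra hlt
    push_neg at hlt
    have := Nat.size_le.2 hlt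
    omega
  have hcast : ((2:ℝ)) ^ ((Nat.size m - 1 : ℕ) : ℝ) ≤ (m:ℝ) := by
    rw [Real.rpow_natCast]
    exact_mod_cast hle
  have h1 : ((Nat.size m - 1 : ℕ) : ℝ) ≤ Real.logb 2 m := by
    have := Real.logb_le_logb_of_le (b := 2) one_lt_two
      (x := (2:ℝ) ^ ((Nat.size m - 1 : ℕ) : ℝ)) (Real.rpow_pos_of_pos two_pos _) hcast
    rwa [Real.logb_rpow two_pos (by norm_num)] at this
  have h2 : ((Nat.size m - 1 : ℕ) : ℝ) = (Nat.size m : ℝ) - 1 := by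
    have : (1:ℕ) ≤ Nat.size m := hpos
    push_cast [Nat.cast_sub this]
    ring
  linarith [h1, h2.symm.le]

end Correct

theorem statement11' {A : Type} [Fintype A] [Encodable A]
    (u : List Bool →. List Bool) (hu : Optimal u)
    (ε : ℝ) (hε : 0 < ε) :
    ∃ N : ℕ, ∀ w : List A, N ≤ w.length →
      (KC u (encWord w) : ℝ) ≤ (w.length : ℝ) * (wordEntropy w + ε) := by
  haveI : DecidableEq A := Encodable.decidableEqOfEncodable A
  obtain ⟨-, hopt⟩ := hu
  set aC := aCode A with haC
  have hcomp : Computable (gdec aC) := (primrec_gdec aC).to_comp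
  obtain ⟨K, hK⟩ := hopt (fun y => Part.some (gdec aC y)) hcomp
  set d := aC.length with hd
  set P := 4 ^ (d + 1) with hP
  have hP1 : 1 ≤ P := Nat.one_le_pow _ _ (by norm_num)
  -- the error term
  set φ : ℕ → ℝ := fun n => 2 * P * Real.logb 2 (n+2) + (2 * P + K + 2) with hφ
  -- eventually φ n ≤ ε * n
  have hev : ∀ᶠ n : ℕ in atTop, φ n / n < ε := by
    have T0 : Tendsto (fun n : ℕ => ((n:ℝ)+2)) atTop atTop :=
      tendsto_atTop_add_const_right _ 2 tendsto_natCast_atTop_atTop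
    have T1 : Tendsto (fun n : ℕ => Real.log ((n:ℝ)+2) / ((n:ℝ)+2)) atTop (nhds 0) :=
      (Real.isLittleO_log_id_atTop.tendsto_div_nhds_zero).comp T0
    have T2 : Tendsto (fun n : ℕ => ((n:ℝ)+2)/n) atTop (nhds 1) := by
      have h : Tendsto (fun n : ℕ => (1:ℝ) + 2/(n:ℝ)) atTop (nhds (1 + 0)) :=
        tendsto_const_nhds.add (tendsto_const_div_atTop_nhds_zero_nat 2)
      rw [add_zero] at h
      refine h.congr' ?_
      filter_upwards [eventually_ge_atTop 1] with n hn
      have : (n:ℝ) ≠ 0 := by positivity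
      field_simp
    have T3 : Tendsto (fun n : ℕ =>
        (2 * (P:ℝ) / Real.log 2) * (Real.log ((n:ℝ)+2) / ((n:ℝ)+2) * (((n:ℝ)+2)/n))
          + (2 * (P:ℝ) + K + 2)/n) atTop (nhds 0) := by
      have h := ((T1.mul T2).const_mul (2 * (P:ℝ) / Real.log 2)).add
        (tendsto_const_div_atTop_nhds_zero_nat (2 * (P:ℝ) + K + 2))
      convert h using 2
      norm_num
    have T4 : Tendsto (fun n : ℕ => φ n / n) atTop (nhds 0) := by
      refine T3.congr' ?_
      filter_upwards [eventually_ge_atTop 1] with n hn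
      have hn0 : (n:ℝ) ≠ 0 := by positivity
      have hn2 : ((n:ℝ)+2) ≠ 0 := by positivity
      have hlog2 : Real.log 2 ≠ 0 := by
        have := Real.log_pos one_lt_two; linarith
      rw [hφ]
      change _ = (2 * (P:ℝ) * Real.logb 2 ((n:ℝ)+2) + (2 * (P:ℝ) + (K:ℝ) + 2)) / (n:ℝ)
      rw [show Real.logb 2 ((n:ℝ)+2) = Real.log ((n:ℝ)+2) / Real.log 2 from rfl]
      field_simp
      try ring
    exact T4.eventually (gt_mem_nhds hε)
  obtain ⟨N₀, hN₀⟩ := eventually_atTop.1 hev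
  refine ⟨max N₀ 1, fun w hw => ?_⟩
  set n := w.length with hn
  have hn1 : 1 ≤ n := le_trans (le_max_right _ _) hw
  have hnN : N₀ ≤ n := le_trans (le_max_left _ _) hw
  have hwne : w ≠ [] := by
    intro h
    rw [h] at hn
    simp at hn
    omega
  have hnR : (0:ℝ) < n := by exact_mod_cast hn1
  set H := wordEntropy w with hH
  have hH0 : 0 ≤ H := wordEntropy_nonneg w
  -- the program
  set w' := w.map (Encodable.encode : A → ℕ) with hw'
  set c₀ := countsC aC w' with hc₀
  set k := List.idxOf w' (classC aC c₀) with hk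
  set t := (Encodable.encode c₀).bits.length with htdef
  set y := List.replicate t false ++ true :: ((Encodable.encode c₀).bits ++ k.bits) with hy
  have hmemw' : ∀ x ∈ w', x ∈ aC := by
    intro x hx
    obtain ⟨a, _, rfl⟩ := List.mem_map.1 hx
    exact mem_aCode a
  have hlenw' : w'.length = n := by simp [hw', hn]
  have hc0sum : c₀.sum = n := by rw [hc₀, sum_countsC nodup_aCode hmemw', hlenw']
  have hmem : w' ∈ classC aC c₀ := by
    rw [classC, hc0sum, List.mem_filter]
    refine ⟨mem_allWordsC.2 ⟨hlenw', hmemw'⟩, by simp [hc₀]⟩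
  -- correctness
  have hcor : gdec aC y = (Encodable.encode w).bits := by
    have h1 := gdec_correct aC c₀ w' hmem
    rw [hy, htdef, hk, ← encode_map_encode w, ← hw']
    exact h1
  have hmemPart : (Nat.bits (encWord w)) ∈ Part.some (gdec aC y) := by
    rw [Part.mem_some_iff, hcor]
    rfl
  have hCF : KC u (encWord w) ≤ y.length + K := hK _ y hmemPart
  have hylen : y.length = 2 * t + 1 + k.bits.length := by
    rw [hy]
    simp [List.length_append, List.length_replicate, htdef]
    omega
  have hkclass : k < (classC aC c₀).length := by
    rw [hk]; exact idxOf_lt_length' hmem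
  have hcard : (((classC aC c₀).length : ℕ) : ℝ) ≤ (2:ℝ) ^ ((n:ℝ) * H) :=
    card_classC_le w hwne
  have hszk : (Nat.size k : ℝ) ≤ (n:ℝ) * H + 1 := by
    set m := Nat.floor ((n:ℝ) * H) + 1 with hm
    have hnH0 : (0:ℝ) ≤ (n:ℝ) * H := by positivity
    have hle2 : ((2:ℝ)) ^ ((n:ℝ) * H) ≤ ((2:ℝ)) ^ ((m:ℕ):ℝ) := by
      apply Real.rpow_le_rpow_of_exponent_le one_le_two
      rw [hm]
      push_cast
      have := Nat.lt_floor_add_one ((n:ℝ) * H)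
      linarith
    have hkm : (k:ℝ) < (2:ℝ) ^ ((m:ℕ):ℝ) := by
      have hkL : (k:ℝ) < (((classC aC c₀).length : ℕ) : ℝ) := by exact_mod_cast hkclass
      linarith
    rw [Real.rpow_natCast] at hkm
    have hk2 : k < 2 ^ m := by exact_mod_cast hkm
    have hsk := Nat.size_le.2 hk2
    have hmle : ((m:ℕ):ℝ) ≤ (n:ℝ) * H + 1 := by
      rw [hm]
      push_cast
      have := Nat.floor_le hnH0
      linarith
    calc (Nat.size k : ℝ) ≤ ((m:ℕ):ℝ) := by exact_mod_cast hsk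
      _ ≤ (n:ℝ) * H + 1 := hmle
  have hc0len : c₀.length = d := by simp [hc₀, countsC, hd]
  have hc0entry : ∀ x ∈ c₀, x ≤ n := by
    intro x hx
    rw [hc₀, countsC] at hx
    obtain ⟨z, _, rfl⟩ := List.mem_map.1 hx
    calc w'.count z ≤ w'.length := List.count_le_length
      _ = n := hlenw'
  have henc : Encodable.encode c₀ ≤ (n+2) ^ P := by
    have h := encode_list_le n c₀ hc0entry
    rwa [hc0len, ← hP] at h
  have hsz : Nat.size (Encodable.encode c₀) ≤ Nat.size (n+2) * P :=
    size_le_of_le_pow (by omega) hP1 henc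
  have htsize : t = Nat.size (Encodable.encode c₀) := by
    rw [htdef, Nat.size_eq_bits_len]
  have hsize2 : (Nat.size (n+2) : ℝ) ≤ Real.logb 2 ((n:ℝ)+2) + 1 := by
    have h := size_le_logb (m := n+2) (by omega)
    push_cast at h
    exact h
  have htR : (t:ℝ) ≤ (P:ℝ) * (Real.logb 2 ((n:ℝ)+2) + 1) := by
    have h1 : (t:ℝ) ≤ (Nat.size (n+2) : ℝ) * (P:ℝ) := by
      rw [htsize]; exact_mod_cast hsz
    have hP0 : (0:ℝ) ≤ (P:ℝ) := by positivity
    calc (t:ℝ) ≤ (Nat.size (n+2):ℝ) * (P:ℝ) := h1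
      _ ≤ (Real.logb 2 ((n:ℝ)+2) + 1) * (P:ℝ) := mul_le_mul_of_nonneg_right hsize2 hP0
      _ = (P:ℝ) * (Real.logb 2 ((n:ℝ)+2) + 1) := by ring
  have hksize : (k.bits.length : ℝ) = (Nat.size k : ℝ) := by
    exact_mod_cast congrArg (Nat.cast (R := ℝ)) (Nat.size_eq_bits_len k)
  have hphin : φ n < ε * n := by
    have h := hN₀ n hnN
    rw [div_lt_iff₀ hnR] at h
    linarith
  have h0 : (KC u (encWord w) : ℝ) ≤ (y.length : ℝ) + (K:ℝ) := by exact_mod_cast hCF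
  have h1 : (y.length : ℝ) = 2*(t:ℝ) + 1 + (k.bits.length:ℝ) := by
    rw [hylen]; push_cast; ring
  have h2 : (k.bits.length : ℝ) ≤ (n:ℝ)*H + 1 := by rw [hksize]; exact hszk
  calc (KC u (encWord w) : ℝ)
      ≤ 2*(t:ℝ) + 1 + (k.bits.length:ℝ) + (K:ℝ) := by linarith
    _ ≤ 2*((P:ℝ) * (Real.logb 2 ((n:ℝ)+2) + 1)) + 1 + ((n:ℝ)*H + 1) + (K:ℝ) := by linarith
    _ = (n:ℝ)*H + (2 * (P:ℝ) * Real.logb 2 ((n:ℝ)+2) + (2 * (P:ℝ) + (K:ℝ) + 2)) := by ring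
    _ = (n:ℝ)*H + φ n := by rw [hφ]
    _ ≤ (n:ℝ)*H + ε * n := by linarith
    _ = (n:ℝ) * (H + ε) := by ring

/-- **Shannon-type bound for complexity of words.** For every `ε > 0`
there is `N` such that every word `w` over the finite alphabet `A` of length at least `N`
satisfies `C(w) ≤ |w| (H(p(w)) + ε)`, where `p(w)` is the letter-frequency vector. -/
theorem statement11 {A : Type} [Fintype A] [Encodable A]
    (u : List Bool →. List Bool) (hu : Optimal u)
    (ε : ℝ) (hε : 0 < ε) :
    ∃ N : ℕ, ∀ w : List A, N ≤ w.length →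
      (KC u (encWord w) : ℝ) ≤ (w.length : ℝ) * (wordEntropy w + ε) :=
  statement11' u hu ε hε

end Brudno
end

section
/- Let G be a countable amenable group, A and B finite sets, π' and π'' two measurable equivariant maps B^G → A^G, and μ an ergodic shift-invariant Borel probability measure on B^G. Let W := { y ∈ B^G : (π'(y))(1_G) ≠ (π''(y))(1_G) } and let 𝓕 = (F_i) be a tempered Følner sequence. Then for μ-almost every y ∈ B^G, dh_𝓕(π'(y), π''(y)) = μ(W); in fact, limsup_i |{ g ∈ F_i : (π'(y))(g) ≠ (π''(y))(g) }| / |F_i| = μ(W), with the limsup being a genuine limit. -/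
open Filter MeasureTheory
open scoped Pointwise Classical

namespace Brudno

set_option linter.unusedSectionVars false
namespace BrudnoAux
open scoped ENNReal NNReal


variable {G : Type} [Group G]

/-- The tile based at `d`. -/
noncomputable def tile (F : ℕ → Finset G) (idx : G → ℕ) (d : G) : Finset G :=
  (F (idx d)).image (· * d)

noncomputable def tiles (F : ℕ → Finset G) (idx : G → ℕ) (S : Finset G) : Finset G :=
  S.biUnion (tile F idx)

lemma card_tile (F : ℕ → Finset G) (idx : G → ℕ) (d : G) :
    (tile F idx d).card = (F (idx d)).card :=
  Finset.card_image_of_injective _ (mul_left_injective d)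

lemma tile_subset_tiles (F : ℕ → Finset G) (idx : G → ℕ) {d : G} {S : Finset G} (hd : d ∈ S) :
    tile F idx d ⊆ tiles F idx S := Finset.subset_biUnion_of_mem _ hd

lemma tiles_mono (F : ℕ → Finset G) (idx : G → ℕ) {S T : Finset G} (h : S ⊆ T) :
    tiles F idx S ⊆ tiles F idx T :=
  Finset.biUnion_subset_biUnion_of_subset_left _ h

/-- A set of same-scale centers is good if its tiles have enough total mass. -/
def good (F : ℕ → Finset G) (idx : G → ℕ) (a : G → ℝ) (lam : ℝ) (i : ℕ) (S : Finset G) : Prop :=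
  lam / 2 * ((F i).card : ℝ) * (S.card : ℝ) ≤ ∑ g ∈ tiles F idx S, a g

/-- Candidates at scale `i` given already-selected centers `V`. -/
noncomputable def cand (F : ℕ → Finset G) (idx : G → ℕ) (E : Finset G) (i : ℕ) (V : Finset G) :
    Finset G :=
  E.filter fun d => idx d = i ∧ Disjoint (tile F idx d) (tiles F idx V)

lemma cand_spec {F : ℕ → Finset G} {idx : G → ℕ} {E : Finset G} {i : ℕ} {V : Finset G} {d : G}
    (h : d ∈ cand F idx E i V) :
    d ∈ E ∧ idx d = i ∧ Disjoint (tile F idx d) (tiles F idx V) := by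
  have := Finset.mem_filter.mp h; exact ⟨this.1, this.2.1, this.2.2⟩

lemma pick_aux (F : ℕ → Finset G) (idx : G → ℕ) (a : G → ℝ) (lam : ℝ) (E : Finset G)
    (i : ℕ) (V : Finset G) :
    ∃ S ∈ ((cand F idx E i V).powerset.filter fun S => good F idx a lam i S),
      ∀ S' ∈ ((cand F idx E i V).powerset.filter fun S => good F idx a lam i S),
        S'.card ≤ S.card := by
  apply Finset.exists_max_image
  refine ⟨∅, Finset.mem_filter.mpr ⟨Finset.empty_mem_powerset _, ?_⟩⟩
  simp [good, tiles]

/-- The selected centers at scale `i`, given previously selected `V`. -/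
noncomputable def pick (F : ℕ → Finset G) (idx : G → ℕ) (a : G → ℝ) (lam : ℝ) (E : Finset G)
    (i : ℕ) (V : Finset G) : Finset G :=
  (pick_aux F idx a lam E i V).choose

lemma pick_subset_cand (F : ℕ → Finset G) (idx : G → ℕ) (a : G → ℝ) (lam : ℝ) (E : Finset G)
    (i : ℕ) (V : Finset G) :
    pick F idx a lam E i V ⊆ cand F idx E i V := by
  have h := (pick_aux F idx a lam E i V).choose_spec.1
  exact Finset.mem_powerset.mp (Finset.mem_filter.mp h).1

lemma pick_good (F : ℕ → Finset G) (idx : G → ℕ) (a : G → ℝ) (lam : ℝ) (E : Finset G)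
    (i : ℕ) (V : Finset G) : good F idx a lam i (pick F idx a lam E i V) :=
  (Finset.mem_filter.mp (pick_aux F idx a lam E i V).choose_spec.1).2

lemma pick_max (F : ℕ → Finset G) (idx : G → ℕ) (a : G → ℝ) (lam : ℝ) (E : Finset G)
    (i : ℕ) (V : Finset G) {d : G} (hd : d ∈ cand F idx E i V)
    (hnd : d ∉ pick F idx a lam E i V) :
    ¬ good F idx a lam i (insert d (pick F idx a lam E i V)) := by
  intro hg
  have hmem : insert d (pick F idx a lam E i V) ∈
      ((cand F idx E i V).powerset.filter fun S => good F idx a lam i S) := by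
    refine Finset.mem_filter.mpr ⟨Finset.mem_powerset.mpr ?_, hg⟩
    exact Finset.insert_subset hd (pick_subset_cand F idx a lam E i V)
  have h2 : (insert d (pick F idx a lam E i V)).card ≤ (pick F idx a lam E i V).card :=
    (pick_aux F idx a lam E i V).choose_spec.2 _ hmem
  rw [Finset.card_insert_of_notMem hnd] at h2
  omega

/-- The state of the selection process after `k` steps (scales `N, N-1, …, N-k+1`). -/
noncomputable def St (F : ℕ → Finset G) (idx : G → ℕ) (a : G → ℝ) (lam : ℝ) (E : Finset G)
    (N : ℕ) : ℕ → Finset G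
  | 0 => ∅
  | k + 1 => St F idx a lam E N k ∪ pick F idx a lam E (N - k) (St F idx a lam E N k)

/-- Selected centers at scale `i`. -/
noncomputable def Dsel (F : ℕ → Finset G) (idx : G → ℕ) (a : G → ℝ) (lam : ℝ) (E : Finset G)
    (N : ℕ) (i : ℕ) : Finset G :=
  pick F idx a lam E i (St F idx a lam E N (N - i))

variable {F : ℕ → Finset G} {idx : G → ℕ} {a : G → ℝ} {lam : ℝ} {E : Finset G} {N : ℕ}

lemma St_mono : Monotone (St F idx a lam E N) :=
  monotone_nat_of_le_succ fun _ => Finset.subset_union_left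

lemma St_succ_eq (k : ℕ) (hk : k ≤ N) :
    St F idx a lam E N (k + 1) = St F idx a lam E N k ∪ Dsel F idx a lam E N (N - k) := by
  rw [Dsel, show N - (N - k) = k by omega]
  rfl

lemma St_subset_E (k : ℕ) : St F idx a lam E N k ⊆ E := by
  induction k with
  | zero => simp [St]
  | succ k ih =>
      intro d hd
      rcases Finset.mem_union.mp hd with h | h
      · exact ih h
      · exact (cand_spec (pick_subset_cand F idx a lam E _ _ h)).1

lemma idx_St {k : ℕ} {d : G} (hd : d ∈ St F idx a lam E N k) : N + 1 ≤ idx d + k := by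
  induction k with
  | zero => simp [St] at hd
  | succ k ih =>
      rcases Finset.mem_union.mp hd with h | h
      · have := ih h; omega
      · have := (cand_spec (pick_subset_cand F idx a lam E _ _ h)).2.1
        omega

lemma mem_Dsel_of_mem_St {k : ℕ} (hk : k ≤ N + 1) {d : G}
    (hd : d ∈ St F idx a lam E N k) : d ∈ Dsel F idx a lam E N (idx d) := by
  induction k with
  | zero => simp [St] at hd
  | succ k ih =>
      rcases Finset.mem_union.mp hd with h | h
      · exact ih (by omega) h
      · have hidx := (cand_spec (pick_subset_cand F idx a lam E _ _ h)).2.1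
        rw [Dsel, hidx, show N - (N - k) = k by omega]
        exact h

lemma Dsel_subset_St (i : ℕ) (hi : i ≤ N) :
    Dsel F idx a lam E N i ⊆ St F idx a lam E N (N - i + 1) := by
  have h := St_succ_eq (F := F) (idx := idx) (a := a) (lam := lam) (E := E) (N := N) (N - i) (by omega)
  rw [show N - (N - i) = i by omega] at h
  rw [h]
  exact Finset.subset_union_right

lemma idx_Dsel {i : ℕ} {d : G} (hd : d ∈ Dsel F idx a lam E N i) : idx d = i :=
  (cand_spec (pick_subset_cand F idx a lam E _ _ hd)).2.1

lemma Dsel_subset_E (i : ℕ) : Dsel F idx a lam E N i ⊆ E := fun _ hd =>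
  (cand_spec (pick_subset_cand F idx a lam E _ _ hd)).1

lemma Dsel_tile_disjoint_St {i : ℕ} {d : G} (hd : d ∈ Dsel F idx a lam E N i) :
    Disjoint (tile F idx d) (tiles F idx (St F idx a lam E N (N - i))) :=
  (cand_spec (pick_subset_cand F idx a lam E _ _ hd)).2.2

lemma Dsel_good (i : ℕ) : good F idx a lam i (Dsel F idx a lam E N i) :=
  pick_good F idx a lam E i _

/-- Tiles of selected centers at distinct scales are disjoint. -/
lemma tiles_Dsel_disjoint {i i' : ℕ} (hi : i < i') (hi' : i' ≤ N) :
    Disjoint (tiles F idx (Dsel F idx a lam E N i)) (tiles F idx (Dsel F idx a lam E N i')) := by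
  rw [tiles, Finset.disjoint_biUnion_left]
  intro d hd
  have h1 := Dsel_tile_disjoint_St hd
  refine (h1.mono_right (tiles_mono F idx ?_)).symm.symm
  refine (Dsel_subset_St i' hi').trans (St_mono ?_)
  omega

section Accounting

variable {F : ℕ → Finset G} {idx : G → ℕ} {a : G → ℝ} {lam : ℝ} {E : Finset G} {N : ℕ}

lemma sum_inter_sdiff (s t : Finset G) (f : G → ℝ) :
    ∑ g ∈ s ∩ t, f g + ∑ g ∈ s \ t, f g = ∑ g ∈ s, f g := by
  classical
  rw [← Finset.sum_union (Finset.disjoint_of_subset_left Finset.inter_subset_right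
    Finset.sdiff_disjoint.symm)]
  congr 1
  ext x
  simp only [Finset.mem_union, Finset.mem_inter, Finset.mem_sdiff]
  tauto

lemma pairwise_disjoint_tiles_Dsel :
    (↑(Finset.range (N + 1)) : Set ℕ).PairwiseDisjoint
      (fun i => tiles F idx (Dsel F idx a lam E N i)) := by
  intro i hi i' hi' hne
  simp only [Finset.coe_range, Set.mem_Iio] at hi hi'
  rcases lt_or_gt_of_ne hne with h | h
  · exact tiles_Dsel_disjoint h (by omega)
  · exact (tiles_Dsel_disjoint h (by omega)).symm

lemma sum_tiles_Dsel_le (ha : ∀ g, 0 ≤ a g) :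
    ∑ i ∈ Finset.range (N + 1), ∑ g ∈ tiles F idx (Dsel F idx a lam E N i), a g
      ≤ ∑ g ∈ tiles F idx E, a g := by
  rw [← Finset.sum_biUnion pairwise_disjoint_tiles_Dsel]
  refine Finset.sum_le_sum_of_subset_of_nonneg ?_ (fun g _ _ => ha g)
  intro g hg
  rcases Finset.mem_biUnion.mp hg with ⟨i, _, hgi⟩
  exact tiles_mono F idx (Dsel_subset_E i) hgi

lemma mass_bound (ha : ∀ g, 0 ≤ a g) :
    lam / 2 * ∑ i ∈ Finset.range (N + 1),
        ((F i).card : ℝ) * ((Dsel F idx a lam E N i).card : ℝ)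
      ≤ ∑ g ∈ tiles F idx E, a g := by
  have h1 : ∀ i ∈ Finset.range (N + 1),
      lam / 2 * (((F i).card : ℝ) * ((Dsel F idx a lam E N i).card : ℝ))
        ≤ ∑ g ∈ tiles F idx (Dsel F idx a lam E N i), a g := by
    intro i _
    have := Dsel_good (F := F) (idx := idx) (a := a) (lam := lam) (E := E) (N := N) i
    rw [good] at this
    linarith
  calc lam / 2 * ∑ i ∈ Finset.range (N + 1),
        ((F i).card : ℝ) * ((Dsel F idx a lam E N i).card : ℝ)
      = ∑ i ∈ Finset.range (N + 1),
        lam / 2 * (((F i).card : ℝ) * ((Dsel F idx a lam E N i).card : ℝ)) := Finset.mul_sum ..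
    _ ≤ ∑ i ∈ Finset.range (N + 1), ∑ g ∈ tiles F idx (Dsel F idx a lam E N i), a g :=
        Finset.sum_le_sum h1
    _ ≤ ∑ g ∈ tiles F idx E, a g := sum_tiles_Dsel_le (lam := lam) ha

/-- The dichotomy for rejected centers. -/
lemma rejected {d : G} (hd : d ∈ E) {i : ℕ} (hdi : idx d = i)
    (hbig : lam * ((F i).card : ℝ) < ∑ g ∈ tile F idx d, a g)
    (hnd : d ∉ Dsel F idx a lam E N i) :
    (¬ Disjoint (tile F idx d) (tiles F idx (St F idx a lam E N (N - i)))) ∨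
      lam / 2 * ((F i).card : ℝ) ≤
        ∑ g ∈ tile F idx d ∩ tiles F idx (Dsel F idx a lam E N i), a g := by
  by_cases hdisj : Disjoint (tile F idx d) (tiles F idx (St F idx a lam E N (N - i)))
  · right
    have hcand : d ∈ cand F idx E i (St F idx a lam E N (N - i)) :=
      Finset.mem_filter.mpr ⟨hd, hdi, hdisj⟩
    have hmax : ¬ good F idx a lam i (insert d (Dsel F idx a lam E N i)) :=
      pick_max F idx a lam E i (St F idx a lam E N (N - i)) hcand hnd
    rw [good] at hmax
    push_neg at hmax
    have hDg := Dsel_good (F := F) (idx := idx) (a := a) (lam := lam) (E := E) (N := N) i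
    rw [good] at hDg
    set D := Dsel F idx a lam E N i with hD
    have hins : tiles F idx (insert d D) = tile F idx d ∪ tiles F idx D :=
      Finset.biUnion_insert ..
    have hndD : d ∉ D := hnd
    rw [Finset.card_insert_of_notMem hndD] at hmax
    have hsum : ∑ g ∈ tiles F idx (insert d D), a g
        = ∑ g ∈ tile F idx d \ tiles F idx D, a g + ∑ g ∈ tiles F idx D, a g := by
      rw [hins, ← Finset.sdiff_union_self_eq_union,
        Finset.sum_union Finset.sdiff_disjoint]
    rw [hsum] at hmax
    have h1 : ∑ g ∈ tile F idx d \ tiles F idx D, a g < lam / 2 * ((F i).card : ℝ) := by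
      push_cast at hmax hDg ⊢
      nlinarith
    have h2 := sum_inter_sdiff (tile F idx d) (tiles F idx D) a
    linarith
  · left; exact hdisj

/-- Count of same-scale rejected centers. -/
lemma Ci_bound (ha : ∀ g, 0 ≤ a g) (i : ℕ) (hne : (F i).Nonempty) :
    lam / 2 *
        ((E.filter fun d => idx d = i ∧ lam / 2 * ((F i).card : ℝ) ≤
          ∑ g ∈ tile F idx d ∩ tiles F idx (Dsel F idx a lam E N i), a g).card : ℝ)
      ≤ ∑ g ∈ tiles F idx (Dsel F idx a lam E N i), a g := by
  classical
  set W := tiles F idx (Dsel F idx a lam E N i) with hW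
  set Ci := E.filter fun d => idx d = i ∧ lam / 2 * ((F i).card : ℝ) ≤
    ∑ g ∈ tile F idx d ∩ W, a g with hCi
  have hFpos : (0 : ℝ) < (F i).card := by
    exact_mod_cast Finset.card_pos.mpr hne
  -- key double counting
  have key : (Ci.card : ℝ) * (lam / 2 * ((F i).card : ℝ)) ≤ ((F i).card : ℝ) * ∑ g ∈ W, a g := by
    have step1 : (Ci.card : ℝ) * (lam / 2 * ((F i).card : ℝ))
        ≤ ∑ d ∈ Ci, ∑ g ∈ tile F idx d ∩ W, a g := by
      have := Finset.card_nsmul_le_sum Ci (fun d => ∑ g ∈ tile F idx d ∩ W, a g)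
        (lam / 2 * ((F i).card : ℝ)) (fun d hd => ((Finset.mem_filter.mp hd).2).2)
      simpa [nsmul_eq_mul] using this
    have step2 : ∑ d ∈ Ci, ∑ g ∈ tile F idx d ∩ W, a g
        = ∑ g ∈ W, (Ci.filter fun d => g ∈ tile F idx d).card * a g := by
      have inner : ∀ d ∈ Ci, ∑ g ∈ tile F idx d ∩ W, a g
          = ∑ g ∈ W, if g ∈ tile F idx d then a g else 0 := by
        intro d _
        rw [Finset.inter_comm, ← Finset.filter_mem_eq_inter, Finset.sum_filter]
      rw [Finset.sum_congr rfl inner, Finset.sum_comm]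
      refine Finset.sum_congr rfl fun g _ => ?_
      rw [Finset.sum_ite, Finset.sum_const, Finset.sum_const_zero, add_zero, nsmul_eq_mul]
    have step3 : ∀ g ∈ W, ((Ci.filter fun d => g ∈ tile F idx d).card : ℝ) ≤ (F i).card := by
      intro g _
      have hsub : (Ci.filter fun d => g ∈ tile F idx d) ⊆ (F i).image (fun f => f⁻¹ * g) := by
        intro d hd
        have hd' := Finset.mem_filter.mp hd
        have hdi : idx d = i := (Finset.mem_filter.mp hd'.1).2.1
        have hgt : g ∈ (F i).image (· * d) := by
          have h2 := hd'.2
          simp only [tile, hdi] at h2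
          exact h2
        rcases Finset.mem_image.mp hgt with ⟨f, hf, hfd⟩
        exact Finset.mem_image.mpr ⟨f, hf, by rw [← hfd]; group⟩
      calc ((Ci.filter fun d => g ∈ tile F idx d).card : ℝ)
          ≤ ((F i).image (fun f => f⁻¹ * g)).card := by exact_mod_cast Finset.card_le_card hsub
        _ ≤ (F i).card := by exact_mod_cast Finset.card_image_le
    calc (Ci.card : ℝ) * (lam / 2 * ((F i).card : ℝ))
        ≤ ∑ d ∈ Ci, ∑ g ∈ tile F idx d ∩ W, a g := step1
      _ = ∑ g ∈ W, (Ci.filter fun d => g ∈ tile F idx d).card * a g := step2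
      _ ≤ ∑ g ∈ W, ((F i).card : ℝ) * a g := by
          refine Finset.sum_le_sum fun g hg => ?_
          exact mul_le_mul_of_nonneg_right (step3 g hg) (ha g)
      _ = ((F i).card : ℝ) * ∑ g ∈ W, a g := by rw [Finset.mul_sum]
  nlinarith [key, hFpos]

/-- The shadow of a selected tile: all smaller-scale centers whose tile meets it. -/
noncomputable def shadow (F : ℕ → Finset G) (idx : G → ℕ) (d' : G) : Finset G :=
  ((Finset.range (idx d')).biUnion fun j => (F j)⁻¹ * F (idx d')).image (· * d')

lemma mem_shadow {d d' : G} {g : G} (hlt : idx d < idx d')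
    (h1 : g ∈ tile F idx d) (h2 : g ∈ tile F idx d') : d ∈ shadow F idx d' := by
  rcases Finset.mem_image.mp h1 with ⟨f, hf, hfd⟩
  rcases Finset.mem_image.mp h2 with ⟨f', hf', hfd'⟩
  refine Finset.mem_image.mpr ⟨f⁻¹ * f', ?_, ?_⟩
  · refine Finset.mem_biUnion.mpr ⟨idx d, Finset.mem_range.mpr hlt, ?_⟩
    exact Finset.mul_mem_mul (Finset.inv_mem_inv hf) hf'
  · have : f * d = f' * d' := by rw [hfd, hfd']
    have hd : d = f⁻¹ * (f' * d') := by rw [← this]; group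
    simp only [hd]; group

lemma shadow_card {C : ℝ} {i : ℕ}
    (htemp : (((Finset.range i).biUnion fun j => (F j)⁻¹ * F i).card : ℝ) ≤ C * (F i).card)
    {d' : G} (hd' : idx d' = i) :
    ((shadow F idx d').card : ℝ) ≤ C * ((F (idx d')).card : ℝ) := by
  rw [shadow, hd']
  calc ((((Finset.range i).biUnion fun j => (F j)⁻¹ * F i).image (· * d')).card : ℝ)
      ≤ (((Finset.range i).biUnion fun j => (F j)⁻¹ * F i).card : ℝ) := by
        exact_mod_cast Finset.card_image_le
    _ ≤ C * (F i).card := htemp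

/-- **The covering lemma** for tempered sequences. -/
theorem covering (F : ℕ → Finset G) (N : ℕ) (hne : ∀ i ≤ N, (F i).Nonempty)
    (C : ℝ) (hC : 0 ≤ C)
    (htemp : ∀ i ≤ N,
      (((Finset.range i).biUnion fun j => (F j)⁻¹ * F i).card : ℝ) ≤ C * (F i).card)
    (a : G → ℝ) (ha : ∀ g, 0 ≤ a g) (lam : ℝ) (hlam : 0 < lam)
    (E : Finset G) (idx : G → ℕ) (hidx : ∀ d ∈ E, idx d ≤ N)
    (hbig : ∀ d ∈ E, lam * ((F (idx d)).card : ℝ) < ∑ g ∈ tile F idx d, a g) :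
    lam * (E.card : ℝ) ≤ 2 * (C + 2) * ∑ g ∈ tiles F idx E, a g := by
  classical
  set A := ∑ g ∈ tiles F idx E, a g with hA
  have hA0 : 0 ≤ A := Finset.sum_nonneg fun g _ => ha g
  -- the three families
  set Ds := fun i => Dsel F idx a lam E N i with hDs
  set Bi := fun i => E.filter fun d => idx d = i ∧
    ¬ Disjoint (tile F idx d) (tiles F idx (St F idx a lam E N (N - i))) with hBi
  set Ci := fun i => E.filter fun d => idx d = i ∧ lam / 2 * ((F i).card : ℝ) ≤
    ∑ g ∈ tile F idx d ∩ tiles F idx (Ds i), a g with hCi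
  -- every point of E is in one of them
  have hsplit : E ⊆ (Finset.range (N + 1)).biUnion fun i => (Ds i ∪ Bi i) ∪ Ci i := by
    intro d hd
    have hiN : idx d ≤ N := hidx d hd
    refine Finset.mem_biUnion.mpr ⟨idx d, Finset.mem_range.mpr (by omega), ?_⟩
    by_cases hsel : d ∈ Ds (idx d)
    · exact Finset.mem_union_left _ (Finset.mem_union_left _ hsel)
    · rcases rejected hd rfl (hbig d hd) hsel with hB | hC2
      · exact Finset.mem_union_left _ (Finset.mem_union_right _
          (Finset.mem_filter.mpr ⟨hd, rfl, hB⟩))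
      · exact Finset.mem_union_right _ (Finset.mem_filter.mpr ⟨hd, rfl, hC2⟩)
  -- card bound via the split
  have hcard : (E.card : ℝ) ≤ ∑ i ∈ Finset.range (N + 1),
      (((Ds i).card : ℝ) + ((Bi i).card : ℝ) + ((Ci i).card : ℝ)) := by
    have h1 : E.card ≤ ∑ i ∈ Finset.range (N + 1), ((Ds i ∪ Bi i) ∪ Ci i).card :=
      le_trans (Finset.card_le_card hsplit) (Finset.card_biUnion_le)
    have h2 : ∀ i, ((Ds i ∪ Bi i) ∪ Ci i).card ≤ (Ds i).card + (Bi i).card + (Ci i).card :=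
      fun i => le_trans (Finset.card_union_le _ _)
        (by have := Finset.card_union_le (Ds i) (Bi i); omega)
    calc (E.card : ℝ) ≤ ∑ i ∈ Finset.range (N + 1), (((Ds i ∪ Bi i) ∪ Ci i).card : ℝ) := by
          exact_mod_cast h1
      _ ≤ _ := by
          refine Finset.sum_le_sum fun i _ => ?_
          exact_mod_cast h2 i
  -- the mass bound
  set S1 := ∑ i ∈ Finset.range (N + 1), ((F i).card : ℝ) * ((Ds i).card : ℝ) with hS1
  have hmass : lam / 2 * S1 ≤ A := mass_bound ha
  have hS1nn : 0 ≤ S1 := Finset.sum_nonneg fun i _ => by positivity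
  -- selected count
  have hDcount : ∑ i ∈ Finset.range (N + 1), ((Ds i).card : ℝ) ≤ S1 := by
    refine Finset.sum_le_sum fun i hi => ?_
    have h1 : (1 : ℝ) ≤ ((F i).card : ℝ) := by
      have := Finset.card_pos.mpr (hne i (by exact Nat.lt_succ_iff.mp (Finset.mem_range.mp hi)))
      exact_mod_cast this
    nlinarith [Nat.cast_nonneg (α := ℝ) (Ds i).card]
  -- case-c count
  have hCcount : lam / 2 * ∑ i ∈ Finset.range (N + 1), ((Ci i).card : ℝ) ≤ A := by
    rw [Finset.mul_sum]
    refine le_trans (Finset.sum_le_sum fun i hi => ?_) (sum_tiles_Dsel_le (lam := lam) ha)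
    exact Ci_bound ha i (hne i (Nat.lt_succ_iff.mp (Finset.mem_range.mp hi)))
  -- case-b count
  have hBcount : ∑ i ∈ Finset.range (N + 1), ((Bi i).card : ℝ) ≤ C * S1 := by
    -- the Bi are pairwise disjoint subsets of the union of shadows
    have hdisjB : (↑(Finset.range (N + 1)) : Set ℕ).PairwiseDisjoint Bi := by
      intro i _ i' _ hne'
      refine Finset.disjoint_left.mpr fun d hd hd' => hne' ?_
      rw [← (Finset.mem_filter.mp hd).2.1, ← (Finset.mem_filter.mp hd').2.1]
    have hsubB : ((Finset.range (N + 1)).biUnion Bi) ⊆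
        (Finset.range (N + 1)).biUnion fun i' => (Ds i').biUnion (shadow F idx) := by
      intro d hd
      rcases Finset.mem_biUnion.mp hd with ⟨i, hi, hdBi⟩
      have hdi : idx d = i := (Finset.mem_filter.mp hdBi).2.1
      have hnd := (Finset.mem_filter.mp hdBi).2.2
      rcases Finset.not_disjoint_iff.mp hnd with ⟨g, hg1, hg2⟩
      rcases Finset.mem_biUnion.mp hg2 with ⟨d', hd'St, hg2'⟩
      have hidx' : N + 1 ≤ idx d' + (N - i) := idx_St hd'St
      have hiN : i ≤ N := Nat.lt_succ_iff.mp (Finset.mem_range.mp hi)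
      have hlt : idx d < idx d' := by omega
      have hd'E : d' ∈ E := St_subset_E _ hd'St
      have hd'N : idx d' ≤ N := hidx d' hd'E
      have hd'D : d' ∈ Ds (idx d') := mem_Dsel_of_mem_St (by omega) hd'St
      refine Finset.mem_biUnion.mpr ⟨idx d', Finset.mem_range.mpr (by omega), ?_⟩
      exact Finset.mem_biUnion.mpr ⟨d', hd'D, mem_shadow hlt hg1 hg2'⟩
    calc ∑ i ∈ Finset.range (N + 1), ((Bi i).card : ℝ)
        = (((Finset.range (N + 1)).biUnion Bi).card : ℝ) := by
          rw [Finset.card_biUnion (fun i hi i' hi' h => hdisjB hi hi' h)]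
          push_cast; ring
      _ ≤ ((((Finset.range (N + 1)).biUnion fun i' => (Ds i').biUnion (shadow F idx))).card : ℝ) := by
          exact_mod_cast Finset.card_le_card hsubB
      _ ≤ ∑ i' ∈ Finset.range (N + 1), (((Ds i').biUnion (shadow F idx)).card : ℝ) := by
          exact_mod_cast Finset.card_biUnion_le
      _ ≤ ∑ i' ∈ Finset.range (N + 1), ∑ d' ∈ Ds i', ((shadow F idx d').card : ℝ) := by
          refine Finset.sum_le_sum fun i' _ => ?_
          exact_mod_cast Finset.card_biUnion_le
      _ ≤ ∑ i' ∈ Finset.range (N + 1), ∑ d' ∈ Ds i', C * ((F i').card : ℝ) := by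
          refine Finset.sum_le_sum fun i' hi' => Finset.sum_le_sum fun d' hd' => ?_
          have hdi' : idx d' = i' := idx_Dsel hd'
          have := shadow_card (F := F) (idx := idx)
            (htemp i' (Nat.lt_succ_iff.mp (Finset.mem_range.mp hi'))) hdi'
          rw [hdi'] at this
          exact this
      _ = C * S1 := by
          rw [hS1, Finset.mul_sum]
          refine Finset.sum_congr rfl fun i' _ => ?_
          rw [Finset.sum_const, nsmul_eq_mul]
          ring
  -- put it all together
  have hfinal : (E.card : ℝ) ≤ (1 + C) * S1 + ∑ i ∈ Finset.range (N + 1), ((Ci i).card : ℝ) := by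
    have := hcard
    have hsum : ∑ i ∈ Finset.range (N + 1),
        (((Ds i).card : ℝ) + ((Bi i).card : ℝ) + ((Ci i).card : ℝ))
        = ∑ i ∈ Finset.range (N + 1), ((Ds i).card : ℝ)
          + ∑ i ∈ Finset.range (N + 1), ((Bi i).card : ℝ)
          + ∑ i ∈ Finset.range (N + 1), ((Ci i).card : ℝ) := by
      rw [Finset.sum_add_distrib, Finset.sum_add_distrib]
    rw [hsum] at this
    linarith
  have hCsum : lam * ∑ i ∈ Finset.range (N + 1), ((Ci i).card : ℝ) ≤ 2 * A := by linarith
  have hS1A : lam * S1 ≤ 2 * A := by linarith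
  calc lam * (E.card : ℝ)
      ≤ lam * ((1 + C) * S1 + ∑ i ∈ Finset.range (N + 1), ((Ci i).card : ℝ)) := by
        exact mul_le_mul_of_nonneg_left hfinal (le_of_lt hlam)
    _ = (1 + C) * (lam * S1) + lam * ∑ i ∈ Finset.range (N + 1), ((Ci i).card : ℝ) := by ring
    _ ≤ (1 + C) * (2 * A) + 2 * A := by
        have h1 : (1 + C) * (lam * S1) ≤ (1 + C) * (2 * A) :=
          mul_le_mul_of_nonneg_left hS1A (by linarith)
        linarith
    _ = 2 * (C + 2) * A := by ring

end Accounting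

section Ergodic

variable {X : Type} [MeasurableSpace X]

/-- Birkhoff average along `F i`. -/
noncomputable def birk (T : G → X → X) (F : ℕ → Finset G) (φ : X → ℝ) (i : ℕ) (x : X) : ℝ :=
  (∑ g ∈ F i, φ (T g x)) / ((F i).card : ℝ)

theorem maximal_ineq
    (μ : Measure X) [IsProbabilityMeasure μ]
    (T : G → X → X) (hTmeas : ∀ g, Measurable (T g))
    (hTmp : ∀ g, MeasurePreserving (T g) μ μ)
    (hTcomp : ∀ g h x, T g (T h x) = T (g * h) x)
    (F : ℕ → Finset G) (hFne : ∀ i, (F i).Nonempty)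
    (hFol : ∀ g : G, Filter.Tendsto
      (fun i => (((F i).image (fun h => g * h) \ F i).card : ℝ) / ((F i).card : ℝ))
      atTop (nhds 0))
    (C : ℝ) (hC : 0 ≤ C)
    (htemp : ∀ i,
      (((Finset.range i).biUnion fun j => (F j)⁻¹ * F i).card : ℝ) ≤ C * (F i).card)
    (φ : X → ℝ) (hφm : Measurable φ) (hφnn : ∀ x, 0 ≤ φ x) (M : ℝ) (hφb : ∀ x, φ x ≤ M)
    (lam : ℝ) (hlam : 0 < lam) :
    μ {x | ∃ i, lam < birk T F φ i x}
      ≤ ENNReal.ofReal (2 * (C + 2) / lam * ∫ x, φ x ∂μ) := by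
  classical
  -- integrability of compositions of φ
  have hint : ∀ g : G, Integrable (fun x => φ (T g x)) μ := by
    intro g
    refine Integrable.mono' (integrable_const M) ((hφm.comp (hTmeas g)).aestronglyMeasurable) ?_
    filter_upwards with x
    rw [Real.norm_eq_abs, abs_of_nonneg (hφnn _)]
    exact hφb _
  have hintφ : Integrable φ μ := by
    refine Integrable.mono' (integrable_const M) hφm.aestronglyMeasurable ?_
    filter_upwards with x
    rw [Real.norm_eq_abs, abs_of_nonneg (hφnn _)]
    exact hφb _
  have hφint_nn : 0 ≤ ∫ x, φ x ∂μ := integral_nonneg hφnn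
  have hbirk_meas : ∀ i, Measurable (fun x => birk T F φ i x) := by
    intro i
    apply Measurable.div_const
    exact Finset.measurable_sum _ (fun g _ => hφm.comp (hTmeas g))
  -- it suffices to bound the truncated maximal sets
  set B : ℝ := 2 * (C + 2) / lam * ∫ x, φ x ∂μ with hB
  have hB0 : 0 ≤ B := by
    apply mul_nonneg _ hφint_nn
    positivity
  set SN : ℕ → Set X := fun N => {x | ∃ i ≤ N, lam < birk T F φ i x} with hSN
  have hSmeas : ∀ N, MeasurableSet (SN N) := by
    intro N
    have : SN N = ⋃ i ∈ Finset.range (N+1), {x | lam < birk T F φ i x} := by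
      ext x
      simp only [hSN, Set.mem_setOf_eq, Set.mem_iUnion, Finset.mem_range, Nat.lt_succ_iff]
      tauto
    rw [this]
    exact MeasurableSet.biUnion (Set.to_countable _)
      (fun i _ => measurableSet_lt measurable_const (hbirk_meas i))
  have main : ∀ N, μ (SN N) ≤ ENNReal.ofReal B := by
    intro N
    set K : Finset G := (Finset.range (N+1)).biUnion F with hK
    -- pointwise covering estimate on the window F m
    have key : ∀ m : ℕ, ∀ x : X,
        lam * ∑ d ∈ F m, (SN N).indicator (fun _ => (1:ℝ)) (T d x)
          ≤ 2 * (C + 2) * ∑ g ∈ K * F m, φ (T g x) := by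
      intro m x
      set a : G → ℝ := fun g => φ (T g x) with ha'
      set idx : G → ℕ := fun d =>
        if h : ∃ i, i ≤ N ∧ lam < birk T F φ i (T d x) then h.choose else 0 with hidxdef
      set E : Finset G := (F m).filter (fun d => T d x ∈ SN N) with hE
      have hidxspec : ∀ d ∈ E, idx d ≤ N ∧ lam < birk T F φ (idx d) (T d x) := by
        intro d hd
        have hmem : T d x ∈ SN N := (Finset.mem_filter.mp hd).2
        have h : ∃ i, i ≤ N ∧ lam < birk T F φ i (T d x) := by
          rcases hmem with ⟨i, hi, hlt⟩; exact ⟨i, hi, hlt⟩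
        rw [hidxdef]
        simp only [dif_pos h]
        exact h.choose_spec
      have hidxN : ∀ d ∈ E, idx d ≤ N := fun d hd => (hidxspec d hd).1
      have hbig : ∀ d ∈ E, lam * ((F (idx d)).card : ℝ) < ∑ g ∈ tile F idx d, a g := by
        intro d hd
        have hlt := (hidxspec d hd).2
        rw [birk] at hlt
        have hcardpos : (0:ℝ) < ((F (idx d)).card : ℝ) := by
          exact_mod_cast Finset.card_pos.mpr (hFne (idx d))
        have hsum : ∑ g ∈ tile F idx d, a g = ∑ f ∈ F (idx d), φ (T f (T d x)) := by
          rw [tile, Finset.sum_image (fun y _ z _ h => mul_left_injective d h)]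
          refine Finset.sum_congr rfl fun f _ => ?_
          rw [ha', hTcomp]
        rw [hsum]
        rw [lt_div_iff₀ hcardpos] at hlt
        linarith
      have hcount : ∑ d ∈ F m, (SN N).indicator (fun _ => (1:ℝ)) (T d x) = (E.card : ℝ) := by
        rw [hE]
        rw [Finset.sum_indicator_eq_sum_filter]
        simp
      have hcover := covering F N (fun i _ => hFne i) C hC (fun i _ => htemp i)
        a (fun g => hφnn _) lam hlam E idx hidxN hbig
      have hsub : tiles F idx E ⊆ K * F m := by
        intro g hg
        rcases Finset.mem_biUnion.mp hg with ⟨d, hd, hgd⟩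
        rcases Finset.mem_image.mp hgd with ⟨f, hf, hfd⟩
        have hdFm : d ∈ F m := (Finset.mem_filter.mp hd).1
        have hfK : f ∈ K := Finset.mem_biUnion.mpr
          ⟨idx d, Finset.mem_range.mpr (Nat.lt_succ_of_le (hidxN d hd)), hf⟩
        rw [← hfd]
        exact Finset.mul_mem_mul hfK hdFm
      have hmono : ∑ g ∈ tiles F idx E, a g ≤ ∑ g ∈ K * F m, φ (T g x) :=
        Finset.sum_le_sum_of_subset_of_nonneg hsub (fun g _ _ => hφnn _)
      rw [hcount]
      calc lam * (E.card : ℝ) ≤ 2 * (C + 2) * ∑ g ∈ tiles F idx E, a g := hcover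
        _ ≤ 2 * (C + 2) * ∑ g ∈ K * F m, φ (T g x) := by
            apply mul_le_mul_of_nonneg_left hmono
            linarith
    -- integrate the pointwise estimate
    have hindint : ∀ d : G, Integrable (fun x => (SN N).indicator (fun _ => (1:ℝ)) (T d x)) μ := by
      intro d
      have hm : Measurable ((SN N).indicator (fun _ => (1:ℝ))) :=
        measurable_const.indicator (hSmeas N)
      refine Integrable.mono' (integrable_const 1) ((hm.comp (hTmeas d)).aestronglyMeasurable) ?_
      filter_upwards with x
      rw [Real.norm_eq_abs]
      rcases Set.indicator_eq_zero_or_self (SN N) (fun _ => (1:ℝ)) (T d x) with h | h <;>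
        rw [h] <;> norm_num
    have hcomp_int : ∀ d : G, ∫ x, (SN N).indicator (fun _ => (1:ℝ)) (T d x) ∂μ
        = (μ (SN N)).toReal := by
      intro d
      have h1 : ∫ x, (SN N).indicator (fun _ => (1:ℝ)) (T d x) ∂μ
          = ∫ y, (SN N).indicator (fun _ => (1:ℝ)) y ∂(Measure.map (T d) μ) := by
        rw [integral_map (hTmeas d).aemeasurable]
        exact (measurable_const.indicator (hSmeas N)).aestronglyMeasurable
      rw [h1, (hTmp d).map_eq]
      rw [integral_indicator_const (1:ℝ) (hSmeas N)]
      simp [Measure.real]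
    have hφcomp_int : ∀ g : G, ∫ x, φ (T g x) ∂μ = ∫ x, φ x ∂μ := by
      intro g
      have h1 : ∫ x, φ (T g x) ∂μ = ∫ y, φ y ∂(Measure.map (T g) μ) := by
        rw [integral_map (hTmeas g).aemeasurable hφm.aestronglyMeasurable]
      rw [h1, (hTmp g).map_eq]
    have intkey : ∀ m : ℕ, lam * ((F m).card : ℝ) * (μ (SN N)).toReal
        ≤ 2 * (C + 2) * ((K * F m).card : ℝ) * ∫ x, φ x ∂μ := by
      intro m
      have hlhs : ∫ x, lam * ∑ d ∈ F m, (SN N).indicator (fun _ => (1:ℝ)) (T d x) ∂μ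
          = lam * ((F m).card : ℝ) * (μ (SN N)).toReal := by
        rw [integral_const_mul, integral_finset_sum _ (fun d _ => hindint d)]
        rw [Finset.sum_congr rfl (fun d _ => hcomp_int d)]
        rw [Finset.sum_const, nsmul_eq_mul]
        ring
      have hrhs : ∫ x, 2 * (C + 2) * ∑ g ∈ K * F m, φ (T g x) ∂μ
          = 2 * (C + 2) * ((K * F m).card : ℝ) * ∫ x, φ x ∂μ := by
        rw [integral_const_mul, integral_finset_sum _ (fun g _ => hint g)]
        rw [Finset.sum_congr rfl (fun g _ => hφcomp_int g)]
        rw [Finset.sum_const, nsmul_eq_mul]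
        ring
      rw [← hlhs, ← hrhs]
      refine integral_mono ?_ ?_ (fun x => key m x)
      · exact (integrable_finset_sum _ (fun d _ => hindint d)).const_mul lam
      · exact (integrable_finset_sum _ (fun g _ => hint g)).const_mul (2 * (C + 2))
    -- window cardinality estimate
    have hKcard : ∀ m : ℕ, ((K * F m).card : ℝ)
        ≤ ((F m).card : ℝ) + ∑ g ∈ K, (((F m).image (fun h => g * h) \ F m).card : ℝ) := by
      intro m
      have hsub : K * F m ⊆ F m ∪ K.biUnion (fun g => (F m).image (fun h => g * h) \ F m) := by
        intro e he
        rcases Finset.mem_mul.mp he with ⟨g, hg, d, hd, rfl⟩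
        by_cases hin : g * d ∈ F m
        · exact Finset.mem_union_left _ hin
        · refine Finset.mem_union_right _ (Finset.mem_biUnion.mpr ⟨g, hg, ?_⟩)
          exact Finset.mem_sdiff.mpr ⟨Finset.mem_image.mpr ⟨d, hd, rfl⟩, hin⟩
      calc ((K * F m).card : ℝ)
          ≤ ((F m ∪ K.biUnion fun g => (F m).image (fun h => g * h) \ F m).card : ℝ) := by
            exact_mod_cast Finset.card_le_card hsub
        _ ≤ ((F m).card : ℝ) + ((K.biUnion fun g => (F m).image (fun h => g * h) \ F m).card : ℝ) := by
            exact_mod_cast Finset.card_union_le _ _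
        _ ≤ _ := by
            have := Finset.card_biUnion_le (s := K)
              (t := fun g => (F m).image (fun h => g * h) \ F m)
            gcongr
            exact_mod_cast this
    -- pass to the limit in m
    have hratio : ∀ m : ℕ, (μ (SN N)).toReal
        ≤ B * (1 + ∑ g ∈ K, (((F m).image (fun h => g * h) \ F m).card : ℝ) / ((F m).card : ℝ)) := by
      intro m
      have hFmpos : (0:ℝ) < ((F m).card : ℝ) := by exact_mod_cast Finset.card_pos.mpr (hFne m)
      have h1 := intkey m
      have h2 := hKcard m
      have hμnn : 0 ≤ (μ (SN N)).toReal := ENNReal.toReal_nonneg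
      rw [hB]
      -- algebra: from h1, h2
      have h3 : lam * ((F m).card : ℝ) * (μ (SN N)).toReal
          ≤ 2 * (C + 2) * (((F m).card : ℝ) + ∑ g ∈ K, (((F m).image (fun h => g * h) \ F m).card : ℝ)) * ∫ x, φ x ∂μ := by
        refine le_trans h1 ?_
        have h20 : (0:ℝ) ≤ 2 * (C + 2) := by linarith
        exact mul_le_mul_of_nonneg_right (mul_le_mul_of_nonneg_left h2 h20) hφint_nn
      have hexp : (2 * (C + 2) / lam * ∫ x, φ x ∂μ) *
          (1 + (∑ g ∈ K, (((F m).image (fun h => g * h) \ F m).card : ℝ)) / ((F m).card : ℝ))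
          = (2 * (C + 2) * (((F m).card : ℝ) + ∑ g ∈ K, (((F m).image (fun h => g * h) \ F m).card : ℝ)) * ∫ x, φ x ∂μ) / (lam * ((F m).card : ℝ)) := by
        have hl : lam ≠ 0 := hlam.ne'
        have hf : ((F m).card : ℝ) ≠ 0 := hFmpos.ne'
        generalize (∑ g ∈ K, (((F m).image (fun h => g * h) \ F m).card : ℝ)) = S
        generalize ((F m).card : ℝ) = c at hf ⊢
        field_simp
      rw [← Finset.sum_div, hexp]
      rw [le_div_iff₀ (by positivity)]
      calc (μ (SN N)).toReal * (lam * ((F m).card : ℝ))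
          = lam * ((F m).card : ℝ) * (μ (SN N)).toReal := by ring
        _ ≤ _ := h3
    have htend : Filter.Tendsto
        (fun m => B * (1 + ∑ g ∈ K, (((F m).image (fun h => g * h) \ F m).card : ℝ) / ((F m).card : ℝ)))
        atTop (nhds B) := by
      have hsum0 : Filter.Tendsto
          (fun m => ∑ g ∈ K, (((F m).image (fun h => g * h) \ F m).card : ℝ) / ((F m).card : ℝ))
          atTop (nhds 0) := by
        have := tendsto_finset_sum K (fun g _ => hFol g)
        simpa using this
      have : Filter.Tendsto
          (fun m => 1 + ∑ g ∈ K, (((F m).image (fun h => g * h) \ F m).card : ℝ) / ((F m).card : ℝ))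
          atTop (nhds 1) := by
        have := hsum0.const_add 1
        simpa using this
      have := this.const_mul B
      simpa using this
    have hfin : (μ (SN N)).toReal ≤ B := ge_of_tendsto' htend hratio
    calc μ (SN N) = ENNReal.ofReal (μ (SN N)).toReal := by
          rw [ENNReal.ofReal_toReal (measure_ne_top μ _)]
      _ ≤ ENNReal.ofReal B := ENNReal.ofReal_le_ofReal hfin
  -- union over N
  have hunion : {x | ∃ i, lam < birk T F φ i x} = ⋃ N, SN N := by
    ext x
    simp only [Set.mem_setOf_eq, Set.mem_iUnion, hSN]
    constructor
    · rintro ⟨i, hi⟩; exact ⟨i, i, le_refl i, hi⟩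
    · rintro ⟨N, i, _, hi⟩; exact ⟨i, hi⟩
  rw [hunion]
  have hmono : Monotone SN := by
    intro N N' hNN' x hx
    rcases hx with ⟨i, hi, hlt⟩
    exact ⟨i, le_trans hi hNN', hlt⟩
  rw [hmono.measure_iUnion]
  exact iSup_le main

/-- Birkhoff averages of a coboundary of a bounded function tend to zero everywhere. -/
theorem birk_cobound (T : G → X → X) (hTcomp : ∀ g h x, T g (T h x) = T (g * h) x)
    (F : ℕ → Finset G) (hFne : ∀ i, (F i).Nonempty)
    (hFol : ∀ g : G, Filter.Tendsto
      (fun i => (((F i).image (fun h => g * h) \ F i).card : ℝ) / ((F i).card : ℝ))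
      atTop (nhds 0))
    (φ : X → ℝ) (hb : ∀ x, |φ x| ≤ 1) (s : G) (x : X) :
    Filter.Tendsto (fun i => birk T F (fun y => φ (T s y) - φ y) i x) atTop (nhds 0) := by
  have hbound : ∀ i, |birk T F (fun y => φ (T s y) - φ y) i x|
      ≤ 2 * ((((F i).image (fun h => s * h) \ F i).card : ℝ) / ((F i).card : ℝ)) := by
    intro i
    have hFpos : (0:ℝ) < ((F i).card : ℝ) := by exact_mod_cast Finset.card_pos.mpr (hFne i)
    rw [birk]
    set A : Finset G := (F i).image (fun h => s * h) with hA
    have hAcard : A.card = (F i).card := Finset.card_image_of_injective _ (mul_right_injective s)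
    have hnum : ∑ g ∈ F i, (φ (T s (T g x)) - φ (T g x))
        = ∑ h ∈ A \ F i, φ (T h x) - ∑ h ∈ F i \ A, φ (T h x) := by
      rw [Finset.sum_sub_distrib]
      have h1 : ∑ g ∈ F i, φ (T s (T g x)) = ∑ h ∈ A, φ (T h x) := by
        rw [hA, Finset.sum_image (fun y _ z _ h => mul_right_injective s h)]
        refine Finset.sum_congr rfl fun g _ => ?_
        rw [hTcomp]
      rw [h1]
      have hsplit : ∀ (U : Finset G), ∑ h ∈ U, φ (T h x)
          = ∑ h ∈ U \ (A ∩ F i), φ (T h x) + ∑ h ∈ U ∩ (A ∩ F i), φ (T h x) := by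
        intro U
        rw [add_comm, sum_inter_sdiff]
      rw [hsplit A, hsplit (F i)]
      have e1 : A \ (A ∩ F i) = A \ F i := by
        ext u; simp only [Finset.mem_sdiff, Finset.mem_inter]; tauto
      have e2 : F i \ (A ∩ F i) = F i \ A := by
        ext u; simp only [Finset.mem_sdiff, Finset.mem_inter]; tauto
      have e3 : A ∩ (A ∩ F i) = A ∩ F i := by
        ext u; simp only [Finset.mem_inter]; tauto
      have e4 : F i ∩ (A ∩ F i) = A ∩ F i := by
        ext u; simp only [Finset.mem_inter]; tauto
      rw [e1, e2, e3, e4]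
      ring
    have hcard_eq : (F i \ A).card = (A \ F i).card := by
      have h1 : (A \ F i).card + (A ∩ F i).card = A.card := by
        rw [Finset.card_sdiff_add_card_inter]
      have h2 : (F i \ A).card + (F i ∩ A).card = (F i).card := by
        rw [Finset.card_sdiff_add_card_inter]
      have h3 : (F i ∩ A).card = (A ∩ F i).card := by rw [Finset.inter_comm]
      omega
    have habs : |∑ g ∈ F i, (φ (T s (T g x)) - φ (T g x))|
        ≤ 2 * ((A \ F i).card : ℝ) := by
      rw [hnum]
      have b1 : |∑ h ∈ A \ F i, φ (T h x)| ≤ ((A \ F i).card : ℝ) := by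
        calc |∑ h ∈ A \ F i, φ (T h x)| ≤ ∑ h ∈ A \ F i, |φ (T h x)| :=
              Finset.abs_sum_le_sum_abs _ _
          _ ≤ ∑ h ∈ A \ F i, 1 := Finset.sum_le_sum fun h _ => hb _
          _ = ((A \ F i).card : ℝ) := by rw [Finset.sum_const]; simp
      have b2 : |∑ h ∈ F i \ A, φ (T h x)| ≤ ((F i \ A).card : ℝ) := by
        calc |∑ h ∈ F i \ A, φ (T h x)| ≤ ∑ h ∈ F i \ A, |φ (T h x)| :=
              Finset.abs_sum_le_sum_abs _ _
          _ ≤ ∑ h ∈ F i \ A, 1 := Finset.sum_le_sum fun h _ => hb _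
          _ = ((F i \ A).card : ℝ) := by rw [Finset.sum_const]; simp
      have hcast : ((F i \ A).card : ℝ) = ((A \ F i).card : ℝ) := by exact_mod_cast hcard_eq
      calc |∑ h ∈ A \ F i, φ (T h x) - ∑ h ∈ F i \ A, φ (T h x)|
          ≤ |∑ h ∈ A \ F i, φ (T h x)| + |∑ h ∈ F i \ A, φ (T h x)| := abs_sub _ _
        _ ≤ ((A \ F i).card : ℝ) + ((F i \ A).card : ℝ) := by linarith
        _ = 2 * ((A \ F i).card : ℝ) := by rw [hcast]; ring
    rw [abs_div]
    rw [abs_of_pos hFpos]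
    rw [div_le_iff₀ hFpos]
    calc |∑ g ∈ F i, (φ (T s (T g x)) - φ (T g x))| ≤ 2 * ((A \ F i).card : ℝ) := habs
      _ = 2 * (((A \ F i).card : ℝ) / ((F i).card : ℝ)) * ((F i).card : ℝ) := by
          field_simp
  have h2 : Filter.Tendsto
      (fun i => 2 * ((((F i).image (fun h => s * h) \ F i).card : ℝ) / ((F i).card : ℝ)))
      atTop (nhds 0) := by
    have := (hFol s).const_mul (2:ℝ)
    simpa using this
  exact squeeze_zero_norm hbound h2

theorem zero_one_of_ae_invariant
    (μ : Measure X) [IsProbabilityMeasure μ] [Countable G]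
    (T : G → X → X) (hTmeas : ∀ g, Measurable (T g))
    (hTcomp : ∀ g h x, T g (T h x) = T (g * h) x) (hT1 : ∀ x, T 1 x = x)
    (herg : ∀ s : Set X, MeasurableSet s → (∀ g, T g ⁻¹' s = s) → μ s = 0 ∨ μ s = 1)
    (E : Set X) (hE : MeasurableSet E) (hinv : ∀ g, μ ((T g ⁻¹' E) \ E) = 0) :
    μ E = 0 ∨ μ E = 1 := by
  set Es : Set X := ⋃ g : G, T g ⁻¹' E with hEs
  have hmeas : MeasurableSet Es := MeasurableSet.iUnion fun g => (hTmeas g) hE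
  have hEsub : E ⊆ Es := fun x hx => Set.mem_iUnion.mpr ⟨1, by rwa [Set.mem_preimage, hT1]⟩
  have hdiff : μ (Es \ E) = 0 := by
    refine measure_mono_null (fun x hx => ?_) (measure_iUnion_null hinv)
    rcases hx with ⟨hx1, hx2⟩
    rcases Set.mem_iUnion.mp hx1 with ⟨g, hg⟩
    exact Set.mem_iUnion.mpr ⟨g, hg, hx2⟩
  have hstrict : ∀ h : G, T h ⁻¹' Es = Es := by
    intro h
    ext x
    simp only [hEs, Set.mem_preimage, Set.mem_iUnion]
    constructor
    · rintro ⟨g, hg⟩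
      exact ⟨g * h, hTcomp g h x ▸ hg⟩
    · rintro ⟨g, hg⟩
      refine ⟨g * h⁻¹, ?_⟩
      rw [hTcomp, inv_mul_cancel_right]
      exact hg
  rcases herg Es hmeas hstrict with h0 | h1
  · left
    exact le_antisymm (le_trans (measure_mono hEsub) (le_of_eq h0)) zero_le
  · right
    have h2 : μ Es ≤ μ E + μ (Es \ E) := by
      refine le_trans (measure_mono fun x hx => ?_) (measure_union_le _ _)
      by_cases hxE : x ∈ E
      · exact Or.inl hxE
      · exact Or.inr ⟨hx, hxE⟩
    rw [hdiff, add_zero] at h2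
    exact le_antisymm prob_le_one (le_trans (le_of_eq h1.symm) h2)

theorem ae_const_of_invariant
    (μ : Measure X) [IsProbabilityMeasure μ] [Countable G]
    (T : G → X → X) (hTmeas : ∀ g, Measurable (T g))
    (hTcomp : ∀ g h x, T g (T h x) = T (g * h) x) (hT1 : ∀ x, T 1 x = x)
    (herg : ∀ s : Set X, MeasurableSet s → (∀ g, T g ⁻¹' s = s) → μ s = 0 ∨ μ s = 1)
    (f : X → ℝ) (hf : Measurable f) (hinvf : ∀ g, (fun x => f (T g x)) =ᵐ[μ] f) :
    ∃ c : ℝ, f =ᵐ[μ] fun _ => c := by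
  have hlevels : ∀ r : ℝ, μ {x | r < f x} = 0 ∨ μ {x | r < f x} = 1 := by
    intro r
    refine zero_one_of_ae_invariant μ T hTmeas hTcomp hT1 herg _
      (measurableSet_lt measurable_const hf) (fun g => ?_)
    have hnull : μ {x | ¬ f (T g x) = f x} = 0 := ae_iff.mp (hinvf g)
    refine measure_mono_null (fun x hx => ?_) hnull
    rcases hx with ⟨hx1, hx2⟩
    simp only [Set.mem_preimage, Set.mem_setOf_eq] at hx1 hx2
    show ¬ f (T g x) = f x
    intro heq
    exact hx2 (by rw [← heq]; exact hx1)
  set s : Set ℝ := {r | μ {x | r < f x} = 0} with hs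
  have hmeas_level : ∀ r : ℝ, MeasurableSet {x | r < f x} :=
    fun r => measurableSet_lt measurable_const hf
  -- s is nonempty
  have hne : s.Nonempty := by
    by_contra hcon
    rw [Set.not_nonempty_iff_eq_empty] at hcon
    have hall : ∀ n : ℕ, μ {x | (n:ℝ) < f x} = 1 := by
      intro n
      have hns : ((n:ℝ)) ∉ s := by rw [hcon]; exact Set.notMem_empty _
      rcases hlevels n with h | h
      · exact absurd h hns
      · exact h
    have hrange : Antitone (fun n : ℕ => {x | (n:ℝ) < f x}) := by
      intro n m hnm x hx
      simp only [Set.mem_setOf_eq] at *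
      have : (n:ℝ) ≤ (m:ℝ) := by exact_mod_cast hnm
      linarith
    have hinter : ⋂ n : ℕ, {x | (n:ℝ) < f x} = ∅ := by
      ext x
      simp only [Set.mem_iInter, Set.mem_setOf_eq, Set.mem_empty_iff_false, iff_false, not_forall,
        not_lt]
      rcases exists_nat_ge (f x) with ⟨n, hn⟩
      exact ⟨n, hn⟩
    have htendsto := tendsto_measure_iInter_atTop (fun n => (hmeas_level _).nullMeasurableSet)
      hrange ⟨0, measure_ne_top μ _⟩
    rw [hinter] at htendsto
    simp only [measure_empty] at htendsto
    have := htendsto.eventually (eventually_lt_nhds (by norm_num : (0:ℝ≥0∞) < 1))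
    rcases this.exists with ⟨n, hn⟩
    simp only [Function.comp_apply, hall n] at hn
    exact absurd hn (by simp)
  have hbdd : BddBelow s := by
    -- there is n with μ {x | -n < f x} = 1 > 0, hence -n is a lower bound
    have hbig : ∃ n : ℕ, μ {x | -(n:ℝ) < f x} ≠ 0 := by
      by_contra hcon
      push_neg at hcon
      have hmono : Monotone (fun n : ℕ => {x | -(n:ℝ) < f x}) := by
        intro n m hnm x hx
        simp only [Set.mem_setOf_eq] at *
        have : (n:ℝ) ≤ (m:ℝ) := by exact_mod_cast hnm
        linarith
      have hunion : ⋃ n : ℕ, {x | -(n:ℝ) < f x} = Set.univ := by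
        ext x
        simp only [Set.mem_iUnion, Set.mem_setOf_eq, Set.mem_univ, iff_true]
        rcases exists_nat_ge (-f x) with ⟨n, hn⟩
        rcases exists_nat_ge ((n:ℝ) + 1) with ⟨m, hm⟩
        exact ⟨m, by linarith⟩
      have : μ (⋃ n : ℕ, {x | -(n:ℝ) < f x}) = 0 := measure_iUnion_null hcon
      rw [hunion] at this
      simp [measure_univ] at this
    rcases hbig with ⟨n, hn⟩
    refine ⟨-(n:ℝ), fun r hr => ?_⟩
    by_contra hlt
    push_neg at hlt
    have hsub : {x | -(n:ℝ) < f x} ⊆ {x | r < f x} := fun x hx => lt_trans hlt hx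
    exact hn (le_antisymm (le_trans (measure_mono hsub) (le_of_eq hr)) zero_le)
  set c : ℝ := sInf s with hc
  have hge : μ {x | c < f x} = 0 := by
    have hcover : {x | c < f x} ⊆ ⋃ n : ℕ, {x | c + 1/((n:ℝ)+1) < f x} := by
      intro x hx
      simp only [Set.mem_setOf_eq] at hx
      rcases exists_nat_one_div_lt (show (0:ℝ) < f x - c by linarith) with ⟨n, hn⟩
      exact Set.mem_iUnion.mpr ⟨n, by simp only [Set.mem_setOf_eq]; linarith⟩
    refine measure_mono_null hcover (measure_iUnion_null fun n => ?_)
    have hlt : c < c + 1/((n:ℝ)+1) := by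
      have : (0:ℝ) < 1/((n:ℝ)+1) := by positivity
      linarith
    rcases (csInf_lt_iff hbdd hne).mp hlt with ⟨r, hrs, hr⟩
    refine measure_mono_null (fun x hx => ?_) hrs
    simp only [Set.mem_setOf_eq] at *
    linarith
  have hle : μ {x | f x < c} = 0 := by
    have hcover : {x | f x < c} ⊆ ⋃ n : ℕ, {x | c - 1/((n:ℝ)+1) < f x}ᶜ := by
      intro x hx
      simp only [Set.mem_setOf_eq] at hx
      rcases exists_nat_one_div_lt (show (0:ℝ) < c - f x by linarith) with ⟨n, hn⟩
      refine Set.mem_iUnion.mpr ⟨n, ?_⟩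
      simp only [Set.mem_compl_iff, Set.mem_setOf_eq, not_lt]
      linarith
    refine measure_mono_null hcover (measure_iUnion_null fun n => ?_)
    have hnotmem : (c - 1/((n:ℝ)+1)) ∉ s := by
      intro hmem
      have := csInf_le hbdd hmem
      have hpos : (0:ℝ) < 1/((n:ℝ)+1) := by positivity
      rw [← hc] at this
      linarith
    have h1 : μ {x | c - 1/((n:ℝ)+1) < f x} = 1 := by
      rcases hlevels (c - 1/((n:ℝ)+1)) with h | h
      · exact absurd h hnotmem
      · exact h
    rw [measure_compl (hmeas_level _) (measure_ne_top μ _), h1, measure_univ]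
    simp
  refine ⟨c, ?_⟩
  rw [Filter.EventuallyEq, ae_iff]
  refine measure_mono_null (fun x hx => ?_) (measure_union_null hle hge)
  simp only [Set.mem_setOf_eq] at hx ⊢
  rcases lt_or_gt_of_ne hx with h | h
  · exact Or.inl h
  · exact Or.inr h

open RealInnerProductSpace in
theorem approx_coboundary
    (μ : Measure X) [IsProbabilityMeasure μ] [Countable G]
    (T : G → X → X) (hTmeas : ∀ g, Measurable (T g))
    (hTmp : ∀ g, MeasurePreserving (T g) μ μ)
    (hTcomp : ∀ g h x, T g (T h x) = T (g * h) x) (hT1 : ∀ x, T 1 x = x)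
    (herg : ∀ s : Set X, MeasurableSet s → (∀ g, T g ⁻¹' s = s) → μ s = 0 ∨ μ s = 1)
    (F : ℕ → Finset G) (hFne : ∀ i, (F i).Nonempty)
    (hFol : ∀ g : G, Tendsto
      (fun i => (((F i).image (fun h => g * h) \ F i).card : ℝ) / ((F i).card : ℝ))
      atTop (nhds 0))
    (f : X → ℝ) (hfm : Measurable f) (hfb : ∀ x, |f x| ≤ 1)
    (δ : ℝ) (hδ : 0 < δ) :
    ∃ b : X → ℝ, Measurable b ∧ (∃ M, ∀ x, |b x| ≤ M) ∧
      (∀ x, Tendsto (fun i => birk T F b i x) atTop (nhds 0)) ∧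
      ∫ x, |f x - (∫ y, f y ∂μ) - b x| ∂μ < δ := by
  classical
  haveI : Fact ((1:ℝ≥0∞) ≤ 2) := ⟨by norm_num⟩
  -- coboundary functions
  set cob : Set X → G → X → ℝ := fun E s x =>
    E.indicator (fun _ => (1:ℝ)) (T s x) - E.indicator (fun _ => (1:ℝ)) x with hcob
  have cob_meas : ∀ (E : Set X) (s : G), MeasurableSet E → Measurable (cob E s) := by
    intro E s hE
    exact ((measurable_const.indicator hE).comp (hTmeas s)).sub (measurable_const.indicator hE)
  have cob_bound : ∀ (E : Set X) (s : G) (x : X), |cob E s x| ≤ 1 := by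
    intro E s x
    rw [hcob]
    by_cases h1 : T s x ∈ E <;> by_cases h2 : x ∈ E <;>
      simp [Set.indicator_of_mem, Set.indicator_of_notMem, h1, h2]
  have cob_memL2 : ∀ (E : Set X) (s : G), MeasurableSet E → MemLp (cob E s) 2 μ := by
    intro E s hE
    refine MemLp.of_bound (cob_meas E s hE).aestronglyMeasurable 1 ?_
    filter_upwards with x
    rw [Real.norm_eq_abs]
    exact cob_bound E s x
  set S : Set (Lp ℝ 2 μ) := {h | ∃ (E : Set X) (s : G), MeasurableSet E ∧ ⇑h =ᵐ[μ] cob E s}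
    with hS
  -- inner products in L² are integrals
  have hinner : ∀ p q : Lp ℝ 2 μ, @inner ℝ _ _ p q = ∫ x, p x * q x ∂μ := by
    intro p q
    rw [L2.inner_def]
    refine integral_congr_ae (Filter.Eventually.of_forall fun x => ?_)
    simp [mul_comm]
  -- the target function
  have hfint : Integrable f μ := by
    refine Integrable.mono' (integrable_const 1) hfm.aestronglyMeasurable ?_
    filter_upwards with x
    rw [Real.norm_eq_abs]
    exact hfb x
  set c0 : ℝ := ∫ y, f y ∂μ with hc0
  set r0 : X → ℝ := fun x => f x - c0 with hr0
  have hr0m : Measurable r0 := hfm.sub measurable_const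
  have hr0int : Integrable r0 μ := hfint.sub (integrable_const c0)
  have hr0int_zero : ∫ x, r0 x ∂μ = 0 := by
    rw [hr0]
    rw [integral_sub hfint (integrable_const c0)]
    simp [hc0, measure_univ]
  have hu : MemLp r0 2 μ := by
    refine MemLp.of_bound hr0m.aestronglyMeasurable (1 + |c0|) ?_
    filter_upwards with x
    rw [Real.norm_eq_abs, hr0]
    have := hfb x
    have h1 : |f x - c0| ≤ |f x| + |c0| := abs_sub _ _
    linarith
  set u : Lp ℝ 2 μ := hu.toLp r0 with huu
  -- u lies in the closed span of the coboundaries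
  have key : u ∈ (Submodule.span ℝ S).topologicalClosure := by
    rw [← Submodule.orthogonal_orthogonal_eq_closure]
    rw [Submodule.mem_orthogonal]
    intro w hw
    have hw' : ∀ v ∈ Submodule.span ℝ S, @inner ℝ _ _ v w = 0 :=
      (Submodule.mem_orthogonal _ _).mp hw
    have hwm : Measurable (⇑w) := (Lp.stronglyMeasurable w).measurable
    have hwint : Integrable (⇑w) μ := (Lp.memLp w).integrable (by norm_num)
    -- w is a.e. invariant
    have winv0 : ∀ s : G, (fun x => w (T s⁻¹ x)) =ᵐ[μ] ⇑w := by
      intro s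
      have hint1 : Integrable (fun x => w (T s⁻¹ x)) μ := by
        have h1 : Integrable (⇑w) (Measure.map (T s⁻¹) μ) := by
          rw [(hTmp s⁻¹).map_eq]; exact hwint
        have h2 := (integrable_map_measure
          (by rw [(hTmp s⁻¹).map_eq]; exact hwm.aestronglyMeasurable)
          (hTmeas s⁻¹).aemeasurable).mp h1
        exact h2
      refine Integrable.ae_eq_of_forall_setIntegral_eq _ _ hint1 hwint ?_
      intro E hE _
      -- orthogonality to the coboundary for (E, s)
      have hvS : (cob_memL2 E s hE).toLp (cob E s) ∈ S :=
        ⟨E, s, hE, MemLp.coeFn_toLp _⟩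
      have horto := hw' _ (Submodule.subset_span hvS)
      rw [hinner] at horto
      have hcoe : (fun x => ((cob_memL2 E s hE).toLp (cob E s)) x * w x)
          =ᵐ[μ] fun x => cob E s x * w x := by
        filter_upwards [MemLp.coeFn_toLp (cob_memL2 E s hE)] with x hx
        rw [hx]
      rw [integral_congr_ae hcoe] at horto
      -- split the integral
      have hi1 : Integrable (fun x => E.indicator (fun _ => (1:ℝ)) (T s x) * w x) μ := by
        refine Integrable.bdd_mul (c := 1) hwint
          ((measurable_const.indicator hE).comp (hTmeas s)).aestronglyMeasurable ?_
        refine Filter.Eventually.of_forall fun x => ?_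
        rw [Real.norm_eq_abs]
        by_cases h : T s x ∈ E <;> simp [Set.indicator_of_mem, Set.indicator_of_notMem, h]
      have hi2 : Integrable (fun x => E.indicator (fun _ => (1:ℝ)) x * w x) μ := by
        refine Integrable.bdd_mul (c := 1) hwint (measurable_const.indicator hE).aestronglyMeasurable ?_
        refine Filter.Eventually.of_forall fun x => ?_
        rw [Real.norm_eq_abs]
        by_cases h : x ∈ E <;> simp [Set.indicator_of_mem, Set.indicator_of_notMem, h]
      have hsplit : ∫ x, cob E s x * w x ∂μ
          = ∫ x, E.indicator (fun _ => (1:ℝ)) (T s x) * w x ∂μ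
            - ∫ x, E.indicator (fun _ => (1:ℝ)) x * w x ∂μ := by
        rw [← integral_sub hi1 hi2]
        refine integral_congr_ae (Filter.Eventually.of_forall fun x => ?_)
        rw [hcob]
        ring
      have heq : ∫ x, E.indicator (fun _ => (1:ℝ)) (T s x) * w x ∂μ
          = ∫ x, E.indicator (fun _ => (1:ℝ)) x * w x ∂μ := by
        rw [hsplit] at horto
        linarith
      -- change of variables on the left
      have hTinv : ∀ x, T s⁻¹ (T s x) = x := by
        intro x
        rw [hTcomp, inv_mul_cancel, hT1]
      have hq : ∀ x, E.indicator (fun _ => (1:ℝ)) (T s x) * w x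
          = (fun y => E.indicator (fun _ => (1:ℝ)) y * w (T s⁻¹ y)) (T s x) := by
        intro x
        simp only []
        rw [hTinv]
      have hqm : Measurable (fun y => E.indicator (fun _ => (1:ℝ)) y * w (T s⁻¹ y)) :=
        (measurable_const.indicator hE).mul (hwm.comp (hTmeas s⁻¹))
      have hcov : ∫ x, E.indicator (fun _ => (1:ℝ)) (T s x) * w x ∂μ
          = ∫ y, E.indicator (fun _ => (1:ℝ)) y * w (T s⁻¹ y) ∂μ := by
        rw [integral_congr_ae (Filter.Eventually.of_forall hq)]
        rw [← integral_map (hTmeas s).aemeasurable hqm.aestronglyMeasurable]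
        rw [(hTmp s).map_eq]
      rw [hcov] at heq
      -- convert to set integrals
      have hindmul : ∀ h : X → ℝ,
          (fun x => E.indicator (fun _ => (1:ℝ)) x * h x) = E.indicator h := by
        intro h
        funext x
        by_cases hx : x ∈ E <;>
          simp [Set.indicator_of_mem, Set.indicator_of_notMem, hx]
      rw [hindmul, hindmul, integral_indicator hE, integral_indicator hE] at heq
      exact heq
    have winv : ∀ g : G, (fun x => w (T g x)) =ᵐ[μ] ⇑w := by
      intro g
      have := winv0 g⁻¹
      rwa [inv_inv] at this
    obtain ⟨c, hc⟩ := ae_const_of_invariant μ T hTmeas hTcomp hT1 herg (⇑w) hwm winv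
    -- compute the inner product
    rw [hinner]
    have hcongr : (fun x => w x * u x) =ᵐ[μ] fun x => c * r0 x := by
      filter_upwards [hc, MemLp.coeFn_toLp hu] with x h1 h2
      rw [h1, huu, h2]
    rw [integral_congr_ae hcongr, integral_const_mul, hr0int_zero, mul_zero]
  -- representation of elements of the span
  have span_rep : ∀ v ∈ Submodule.span ℝ S, ∃ b : X → ℝ, Measurable b ∧
      (∃ M, ∀ x, |b x| ≤ M) ∧ (∀ x, Tendsto (fun i => birk T F b i x) atTop (nhds 0)) ∧
      ⇑v =ᵐ[μ] b := by
    intro v hv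
    induction hv using Submodule.span_induction with
    | mem v hvS =>
        rcases hvS with ⟨E, s, hE, hae⟩
        refine ⟨cob E s, cob_meas E s hE, ⟨1, cob_bound E s⟩, ?_, hae⟩
        intro x
        exact birk_cobound T hTcomp F hFne hFol (E.indicator (fun _ => (1:ℝ)))
          (fun y => by
            by_cases h : y ∈ E <;>
              simp [Set.indicator_of_mem, Set.indicator_of_notMem, h]) s x
    | zero =>
        refine ⟨fun _ => 0, measurable_const, ⟨0, by simp⟩, ?_, Lp.coeFn_zero ..⟩
        intro x
        simp only [birk, Finset.sum_const_zero, zero_div]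
        exact tendsto_const_nhds
    | add p q hp hq ihp ihq =>
        rcases ihp with ⟨b1, hb1m, ⟨M1, hb1b⟩, hb1t, hb1ae⟩
        rcases ihq with ⟨b2, hb2m, ⟨M2, hb2b⟩, hb2t, hb2ae⟩
        refine ⟨fun x => b1 x + b2 x, hb1m.add hb2m, ⟨M1 + M2, fun x => ?_⟩, ?_, ?_⟩
        · calc |b1 x + b2 x| ≤ |b1 x| + |b2 x| := abs_add_le _ _
            _ ≤ M1 + M2 := add_le_add (hb1b x) (hb2b x)
        · intro x
          have hbirk : ∀ i, birk T F (fun x => b1 x + b2 x) i x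
              = birk T F b1 i x + birk T F b2 i x := by
            intro i
            simp only [birk, Finset.sum_add_distrib, add_div]
          have hadd := (hb1t x).add (hb2t x)
          rw [add_zero] at hadd
          refine hadd.congr fun i => (hbirk i).symm
        · filter_upwards [Lp.coeFn_add p q, hb1ae, hb2ae] with x h1 h2 h3
          rw [h1]
          simp [h2, h3]
    | smul a p hp ihp =>
        rcases ihp with ⟨b1, hb1m, ⟨M1, hb1b⟩, hb1t, hb1ae⟩
        refine ⟨fun x => a * b1 x, measurable_const.mul hb1m, ⟨|a| * M1, fun x => ?_⟩, ?_, ?_⟩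
        · rw [abs_mul]
          refine mul_le_mul_of_nonneg_left (hb1b x) (abs_nonneg a)
        · intro x
          have hbirk : ∀ i, birk T F (fun x => a * b1 x) i x = a * birk T F b1 i x := by
            intro i
            simp only [birk, ← Finset.mul_sum, mul_div_assoc]
          have := (hb1t x).const_mul a
          rw [mul_zero] at this
          refine this.congr fun i => ?_
          rw [hbirk i]
        · filter_upwards [Lp.coeFn_smul a p, hb1ae] with x h1 h2
          rw [h1]
          simp [h2]
  -- extract the approximation
  have hclos : (u : Lp ℝ 2 μ) ∈ closure (↑(Submodule.span ℝ S) : Set (Lp ℝ 2 μ)) := by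
    rw [← Submodule.topologicalClosure_coe]
    exact key
  rcases Metric.mem_closure_iff.mp hclos δ hδ with ⟨v, hvmem, hdist⟩
  rcases span_rep v hvmem with ⟨b, hbm, hbb, hbt, hbae⟩
  refine ⟨b, hbm, hbb, hbt, ?_⟩
  set r : X → ℝ := fun x => f x - c0 - b x with hr
  have hrm : Measurable r := hr0m.sub hbm
  have hrae : ⇑(u - v) =ᵐ[μ] r := by
    filter_upwards [Lp.coeFn_sub u v, MemLp.coeFn_toLp hu, hbae] with x h1 h2 h3
    rw [h1]
    simp only [Pi.sub_apply]
    show (hu.toLp r0) x - v x = r x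
    rw [h2, h3]
  have step1 : ∫ x, |r x| ∂μ = (eLpNorm r 1 μ).toReal := by
    have h1 : ∫ x, |r x| ∂μ = ∫ x, ‖r x‖ ∂μ := by
      refine integral_congr_ae (Filter.Eventually.of_forall fun x => ?_)
      exact (Real.norm_eq_abs (r x)).symm
    rw [h1, integral_norm_eq_lintegral_enorm hrm.aestronglyMeasurable,
      eLpNorm_one_eq_lintegral_enorm]
  have step2 : eLpNorm r 2 μ = eLpNorm (⇑(u - v)) 2 μ := (eLpNorm_congr_ae hrae).symm
  have step3 : (eLpNorm r 1 μ).toReal ≤ (eLpNorm r 2 μ).toReal := by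
    refine ENNReal.toReal_mono ?_ (eLpNorm_le_eLpNorm_of_exponent_le (by norm_num) 
      hrm.aestronglyMeasurable)
    rw [step2]
    exact Lp.eLpNorm_ne_top _
  have step4 : (eLpNorm (⇑(u - v)) 2 μ).toReal = dist u v := by
    rw [dist_eq_norm, Lp.norm_def]
  calc ∫ x, |f x - (∫ y, f y ∂μ) - b x| ∂μ = ∫ x, |r x| ∂μ := by rw [hr, hc0]
    _ = (eLpNorm r 1 μ).toReal := step1
    _ ≤ (eLpNorm r 2 μ).toReal := step3
    _ = (eLpNorm (⇑(u - v)) 2 μ).toReal := by rw [step2]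
    _ = dist u v := step4
    _ < δ := hdist

/-- The pointwise ergodic theorem along a tempered Følner sequence, for indicators. -/
theorem pointwise_ergodic
    (μ : Measure X) [IsProbabilityMeasure μ] [Countable G]
    (T : G → X → X) (hTmeas : ∀ g, Measurable (T g))
    (hTmp : ∀ g, MeasurePreserving (T g) μ μ)
    (hTcomp : ∀ g h x, T g (T h x) = T (g * h) x) (hT1 : ∀ x, T 1 x = x)
    (herg : ∀ s : Set X, MeasurableSet s → (∀ g, T g ⁻¹' s = s) → μ s = 0 ∨ μ s = 1)
    (F : ℕ → Finset G) (hFne : ∀ i, (F i).Nonempty)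
    (hFol : ∀ g : G, Tendsto
      (fun i => (((F i).image (fun h => g * h) \ F i).card : ℝ) / ((F i).card : ℝ))
      atTop (nhds 0))
    (C : ℝ) (hC : 0 ≤ C)
    (htemp : ∀ i,
      (((Finset.range i).biUnion fun j => (F j)⁻¹ * F i).card : ℝ) ≤ C * (F i).card)
    (W : Set X) (hW : MeasurableSet W) :
    μ {x | ¬ Tendsto (fun i => birk T F (W.indicator fun _ => (1:ℝ)) i x) atTop
        (nhds (μ W).toReal)} = 0 := by
  classical
  set f : X → ℝ := W.indicator fun _ => (1:ℝ) with hf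
  have hfm : Measurable f := measurable_const.indicator hW
  have hfb : ∀ x, |f x| ≤ 1 := by
    intro x
    by_cases h : x ∈ W <;> simp [hf, Set.indicator_of_mem, Set.indicator_of_notMem, h]
  have hc0 : ∫ y, f y ∂μ = (μ W).toReal := by
    rw [hf, integral_indicator_const (1:ℝ) hW]
    simp [Measure.real]
  set c0 : ℝ := (μ W).toReal with hc0'
  -- the deviation sets
  set Lev : ℕ → Set X := fun m =>
    {x | ∃ᶠ i in atTop, 1/((m:ℝ)+1) < |birk T F f i x - c0|} with hLev
  have hLevnull : ∀ m, μ (Lev m) = 0 := by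
    intro m
    set lam : ℝ := 1/(2*((m:ℝ)+1)) with hlam'
    have hlampos : 0 < lam := by positivity
    -- for every δ > 0 the measure is at most ofReal (2(C+2)/lam * δ)
    have hbound : ∀ δ : ℝ, 0 < δ →
        μ (Lev m) ≤ ENNReal.ofReal (2 * (C + 2) / lam * δ) := by
      intro δ hδ
      rcases approx_coboundary μ T hTmeas hTmp hTcomp hT1 herg F hFne hFol f hfm hfb δ hδ
        with ⟨b, hbm, ⟨M, hbb⟩, hbt, hbint⟩
      rw [hc0] at hbint
      set r : X → ℝ := fun x => f x - c0 - b x with hr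
      have hrm : Measurable r := (hfm.sub measurable_const).sub hbm
      -- pointwise decomposition of the averages
      have hdecomp : ∀ i x, birk T F f i x - c0 = birk T F b i x + birk T F r i x := by
        intro i x
        have hcardpos : (0:ℝ) < ((F i).card : ℝ) := by
          exact_mod_cast Finset.card_pos.mpr (hFne i)
        have h1 : ∀ g : G, f (T g x) = c0 + b (T g x) + r (T g x) := by
          intro g; rw [hr]; ring
        have h2 : ∑ g ∈ F i, f (T g x)
            = ((F i).card : ℝ) * c0 + (∑ g ∈ F i, b (T g x) + ∑ g ∈ F i, r (T g x)) := by
          rw [Finset.sum_congr rfl (fun g _ => h1 g), Finset.sum_add_distrib,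
            Finset.sum_add_distrib, Finset.sum_const, nsmul_eq_mul]
          ring
        simp only [birk]
        rw [h2]
        rw [add_div, add_div, mul_div_cancel_left₀ _ hcardpos.ne']
        ring
      -- inclusion into the maximal set of |r|
      have hincl : Lev m ⊆ {x | ∃ i, lam < birk T F (fun y => |r y|) i x} := by
        intro x hx
        have hbx := hbt x
        have hev : ∀ᶠ i in atTop, |birk T F b i x| < lam := by
          have h0 : Tendsto (fun i => |birk T F b i x|) atTop (nhds 0) := by
            have := hbx.abs
            simpa using this
          exact h0.eventually (eventually_lt_nhds hlampos)
        rcases ((hx.and_eventually hev)).exists with ⟨i, hi1, hi2⟩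
        refine ⟨i, ?_⟩
        have habs : |birk T F r i x| ≤ birk T F (fun y => |r y|) i x := by
          have hcardpos : (0:ℝ) < ((F i).card : ℝ) := by
            exact_mod_cast Finset.card_pos.mpr (hFne i)
          simp only [birk, abs_div, abs_of_pos hcardpos]
          gcongr
          exact Finset.abs_sum_le_sum_abs _ _
        have h3 : 1/((m:ℝ)+1) - lam < |birk T F r i x| := by
          have := hdecomp i x
          have h4 : |birk T F r i x| ≥ |birk T F f i x - c0| - |birk T F b i x| := by
            rw [this]
            have := abs_add_le (birk T F b i x) (birk T F r i x)
            have h5 := abs_sub_abs_le_abs_sub (birk T F b i x + birk T F r i x)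
              (birk T F b i x)
            simp only [add_sub_cancel_left] at h5
            linarith [abs_nonneg (birk T F b i x)]
          linarith
        have hlamhalf : 1/((m:ℝ)+1) - lam = lam := by
          rw [hlam']
          field_simp
          ring
        rw [hlamhalf] at h3
        linarith [habs]
      refine le_trans (measure_mono hincl) ?_
      have hmax := maximal_ineq μ T hTmeas hTmp hTcomp F hFne hFol C hC htemp
        (fun y => |r y|) hrm.abs (fun y => abs_nonneg _) (2 + M)
        (fun y => by
          have h1 := hfb y
          have h2 := hbb y
          rw [hr]
          have := abs_sub (f y - c0) (b y)
          have h3 : |f y - c0| ≤ |f y| + |c0| := abs_sub _ _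
          have h4 : |c0| ≤ 1 := by
            rw [hc0', abs_of_nonneg ENNReal.toReal_nonneg]
            calc (μ W).toReal ≤ (1 : ℝ≥0∞).toReal := ENNReal.toReal_mono (by simp) prob_le_one
              _ = 1 := by simp
          calc |f y - c0 - b y| ≤ |f y - c0| + |b y| := abs_sub _ _
            _ ≤ |f y| + |c0| + |b y| := by linarith
            _ ≤ 2 + M := by linarith)
        lam hlampos
      refine le_trans hmax (ENNReal.ofReal_le_ofReal ?_)
      have hint_r : ∫ y, |r y| ∂μ < δ := hbint
      have hpos : 0 ≤ 2 * (C + 2) / lam := by positivity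
      exact mul_le_mul_of_nonneg_left (le_of_lt hint_r) hpos
    -- conclude the measure is zero
    have htends : Tendsto (fun n : ℕ => ENNReal.ofReal (2 * (C + 2) / lam * (1/((n:ℝ)+1))))
        atTop (nhds 0) := by
      rw [show (0:ℝ≥0∞) = ENNReal.ofReal 0 by simp]
      refine ENNReal.tendsto_ofReal ?_
      rw [show (0:ℝ) = 2 * (C + 2) / lam * 0 by ring]
      exact (tendsto_one_div_add_atTop_nhds_zero_nat).const_mul _
    refine le_antisymm ?_ zero_le
    refine ge_of_tendsto' htends fun n => ?_
    exact hbound _ (by positivity)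
  -- the bad set is contained in the union of the deviation sets
  have hBad : {x | ¬ Tendsto (fun i => birk T F f i x) atTop (nhds c0)} ⊆ ⋃ m, Lev m := by
    intro x hx
    simp only [Set.mem_setOf_eq] at hx
    rw [Metric.tendsto_atTop] at hx
    push_neg at hx
    rcases hx with ⟨ε, hε, hfreq⟩
    rcases exists_nat_one_div_lt hε with ⟨m, hm⟩
    refine Set.mem_iUnion.mpr ⟨m, ?_⟩
    rw [hLev, Set.mem_setOf_eq, Filter.frequently_atTop]
    intro n
    rcases hfreq n with ⟨i, hin, hid⟩
    refine ⟨i, hin, ?_⟩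
    rw [Real.dist_eq] at hid
    linarith
  exact measure_mono_null hBad (measure_iUnion_null hLevnull)

end Ergodic

end BrudnoAux

/-- Let `π', π''` be two measurable equivariant maps `B^G → A^G`, `μ`
an ergodic shift-invariant Borel probability measure on `B^G`, `W` the set where the
generator maps of `π'` and `π''` differ, and `(F_i)` a tempered Følner sequence. Then for
`μ`-a.e. `y`, the empirical frequency of disagreement of `π'(y)` and `π''(y)` on `F_i`
converges to `μ(W)`; in particular the asymptotic Hamming distance (a `limsup`) equals
`μ(W)`. -/
theorem statement14 {G A B : Type} [Group G] [Countable G] [Fintype A] [Fintype B]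
    (F : ℕ → Finset G) (hF : IsFolner F) (htemp : Tempered F)
    (μ : @Measure (G → B) (prodisBorel G B)) (hμ1 : μ Set.univ = 1)
    (hinv : ∀ g : G, @Measure.map _ _ (prodisBorel G B) (prodisBorel G B) (shift g) μ = μ)
    (herg : ∀ s : Set (G → B), @MeasurableSet _ (prodisBorel G B) s →
      (∀ g : G, shift g ⁻¹' s = s) → μ s = 0 ∨ μ s = 1)
    (π' π'' : (G → B) → (G → A))
    (hmeas' : @Measurable _ _ (prodisBorel G B) (prodisBorel G A) π')
    (hmeas'' : @Measurable _ _ (prodisBorel G B) (prodisBorel G A) π'')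
    (hequi' : ∀ (g : G) (y : G → B), π' (shift g y) = shift g (π' y))
    (hequi'' : ∀ (g : G) (y : G → B), π'' (shift g y) = shift g (π'' y)) :
    μ {y : G → B |
        ¬ (Tendsto
            (fun i => ((((F i).filter fun g => π' y g ≠ π'' y g)).card : ℝ) / ((F i).card : ℝ))
            atTop (nhds (μ {z : G → B | π' z 1 ≠ π'' z 1}).toReal) ∧
          limsup
            (fun i => ((((F i).filter fun g => π' y g ≠ π'' y g)).card : ℝ) / ((F i).card : ℝ))
            atTop = (μ {z : G → B | π' z 1 ≠ π'' z 1}).toReal)} = 0 := by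
  classical
  letI tB : TopologicalSpace B := ⊥
  haveI : DiscreteTopology B := ⟨rfl⟩
  letI tA : TopologicalSpace A := ⊥
  haveI : DiscreteTopology A := ⟨rfl⟩
  letI mB : MeasurableSpace B := ⊤
  letI mA : MeasurableSpace A := ⊤
  letI mX : MeasurableSpace (G → B) := prodisBorel G B
  letI mY : MeasurableSpace (G → A) := prodisBorel G A
  letI tX : TopologicalSpace (G → B) := prodiscrete G B
  letI tY : TopologicalSpace (G → A) := prodiscrete G A
  haveI hborX : @BorelSpace (G → B) tX mX := ⟨rfl⟩
  haveI hborY : @BorelSpace (G → A) tY mY := ⟨rfl⟩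
  haveI hborB : @BorelSpace B tB mB := ⟨by rw [borel_eq_top_of_discrete]⟩
  haveI hborA : @BorelSpace A tA mA := ⟨by rw [borel_eq_top_of_discrete]⟩
  haveI hPM : IsProbabilityMeasure μ := ⟨hμ1⟩
  -- basic measurability
  have hevalB : ∀ g : G, Measurable (fun y : G → B => y g) := by
    intro g
    haveI : @OpensMeasurableSpace (G → B) Pi.topologicalSpace mX := @BorelSpace.opensMeasurable _ tX mX hborX
    exact (continuous_apply (A := fun _ : G => B) g).measurable
  have hevalA : ∀ g : G, Measurable (fun z : G → A => z g) := by
    intro g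
    haveI : @OpensMeasurableSpace (G → A) Pi.topologicalSpace mY := @BorelSpace.opensMeasurable _ tY mY hborY
    exact (continuous_apply (A := fun _ : G => A) g).measurable
  have hTmeas : ∀ g : G, Measurable (shift (A := B) g) := by
    intro g
    have hc : Continuous (shift (A := B) g) := by
      apply continuous_pi
      intro h
      exact continuous_apply (A := fun _ : G => B) (h * g)
    exact hc.measurable
  have hTcomp : ∀ (g h : G) (y : G → B), shift g (shift h y) = shift (g * h) y := by
    intro g h y
    funext k
    simp only [shift, mul_assoc]
  have hT1 : ∀ y : G → B, shift (1 : G) y = y := by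
    intro y
    funext k
    simp [shift]
  have hTmp : ∀ g : G, MeasurePreserving (shift (A := B) g) μ μ :=
    fun g => ⟨hTmeas g, hinv g⟩
  -- the disagreement set
  set W : Set (G → B) := {z : G → B | π' z 1 ≠ π'' z 1} with hW'
  have hW : MeasurableSet W := by
    have h1 : Measurable (fun z : G → B => π' z 1) := (hevalA 1).comp hmeas'
    have h2 : Measurable (fun z : G → B => π'' z 1) := (hevalA 1).comp hmeas''
    have : W = ⋃ a : A, ((fun z : G → B => π' z 1) ⁻¹' {a}) ∩
        ((fun z : G → B => π'' z 1) ⁻¹' {a})ᶜ := by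
      ext z
      simp only [hW', Set.mem_setOf_eq, Set.mem_iUnion, Set.mem_inter_iff, Set.mem_preimage,
        Set.mem_singleton_iff, Set.mem_compl_iff]
      constructor
      · intro h
        exact ⟨π' z 1, rfl, fun hc => h (by rw [hc])⟩
      · rintro ⟨a, ha1, ha2⟩
        intro hc
        exact ha2 (by rw [← hc, ha1])
    rw [this]
    refine MeasurableSet.iUnion fun a => (h1 (MeasurableSet.singleton a)).inter
      ((h2 (MeasurableSet.singleton a)).compl)
  -- tempered constant
  rcases htemp with ⟨C, hCpos, hCtemp⟩
  -- the ergodic theorem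
  have main := BrudnoAux.pointwise_ergodic μ shift hTmeas hTmp hTcomp hT1 herg
    F hF.1 hF.2 C (le_of_lt hCpos) hCtemp W hW
  -- identify the averages
  have hseq : ∀ (y : G → B) (i : ℕ),
      ((((F i).filter fun g => π' y g ≠ π'' y g)).card : ℝ) / ((F i).card : ℝ)
        = BrudnoAux.birk shift F (W.indicator fun _ => (1:ℝ)) i y := by
    intro y i
    rw [BrudnoAux.birk]
    congr 1
    have hmem : ∀ g : G, shift g y ∈ W ↔ π' y g ≠ π'' y g := by
      intro g
      simp only [hW', Set.mem_setOf_eq, hequi', hequi'']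
      rw [show shift g (π' y) 1 = π' y g by simp [shift],
        show shift g (π'' y) 1 = π'' y g by simp [shift]]
    have h1 : ∀ g ∈ F i, W.indicator (fun _ => (1:ℝ)) (shift g y)
        = if π' y g ≠ π'' y g then (1:ℝ) else 0 := by
      intro g _
      by_cases h : shift g y ∈ W
      · rw [Set.indicator_of_mem h, if_pos ((hmem g).mp h)]
      · rw [Set.indicator_of_notMem h, if_neg (fun hc => h ((hmem g).mpr hc))]
    rw [Finset.sum_congr rfl h1, Finset.sum_ite, Finset.sum_const, Finset.sum_const_zero,
      add_zero, nsmul_eq_mul, mul_one]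
  -- conclusion
  refine measure_mono_null ?_ main
  intro y hy
  simp only [Set.mem_setOf_eq] at hy ⊢
  intro ht
  apply hy
  have heq : (fun i => ((((F i).filter fun g => π' y g ≠ π'' y g)).card : ℝ) / ((F i).card : ℝ))
      = fun i => BrudnoAux.birk shift F (W.indicator fun _ => (1:ℝ)) i y :=
    funext (hseq y)
  rw [heq]
  exact ⟨ht, ht.limsup_eq⟩

end Brudno
end
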